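/- arXiv:2506.18401 — 3 statements merged into one kernel-verified Lean document; each statement's English description precedes it below -/
import Mathlib

section
/- For every number of processes n ≥ 2, there is a wait-free strongly linearizable implementation of the one-shot contest object using (n-1)-window registers. -/
set_option autoImplicit false

/-! ## Base objects and primitives -/

/-- A base object: a shared-memory object accessed via atomic primitives.
Responses of primitives are encoded as lists of naturals. -/
structure BaseObject : Type 1 where
  State : Type
  init : State
  Prim : Type
  apply : Prim → State → State × List ℕ

/-- A base object has *interfering* primitives if at any state, the application of
any pair of primitives either commutes or one overwrites the other. -/
def Interfering (B : BaseObject) : Prop :=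
  ∀ (f g : B.Prim) (s : B.State),
    (B.apply g (B.apply f s).1).1 = (B.apply f (B.apply g s).1).1 ∨
    (B.apply f (B.apply g s).1).1 = (B.apply f s).1 ∨
    (B.apply g (B.apply f s).1).1 = (B.apply g s).1

/-- A read/write register: primitive `some v` writes `v`, primitive `none` reads. -/
def RWRegister : BaseObject where
  State := ℕ
  init := 0
  Prim := Option ℕ
  apply := fun p s =>
    match p with
    | some v => (v, [])
    | none => (s, [s])

/-- A `w`-window register stores the sequence of the last `w` values written to it;
`some v` appends `v` (dropping the oldest value if the length exceeds `w`),
`none` reads the stored sequence. -/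
def WindowRegister (w : ℕ) : BaseObject where
  State := List ℕ
  init := []
  Prim := Option ℕ
  apply := fun p s =>
    match p with
    | some v => ((s ++ [v]).drop (s.length + 1 - w), [])
    | none => (s, s)

/-- A test&set object: `T&S()` atomically sets the bit and returns the previous value. -/
def TestAndSet : BaseObject where
  State := Bool
  init := false
  Prim := Unit
  apply := fun _ s => (true, [if s then 1 else 0])

/-! ## Sequential specifications -/

/-- A (possibly nondeterministic) sequential specification for `n` processes.
`δ s i op s' r` holds if process `i` invoking `op` in state `s` may move the object
to state `s'` returning `r`.  `allowed i hist op` says whether process `i`, having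
already invoked the operations `hist`, may invoke `op` (used to express one-shot
objects and the referee/competitor roles). -/
structure Spec (n : ℕ) : Type 1 where
  Op : Type
  Res : Type
  State : Type
  init : State
  δ : State → Fin n → Op → State → Res → Prop
  allowed : Fin n → List Op → Op → Bool

/-- Valid sequential executions of a specification, starting at a given state. -/
inductive SeqRun {n : ℕ} (S : Spec n) : S.State → List (Fin n × S.Op × S.Res) → Prop
  | nil (s : S.State) : SeqRun S s []
  | cons {s : S.State} {i : Fin n} {op : S.Op} {s' : S.State} {r : S.Res}
      {l : List (Fin n × S.Op × S.Res)} :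
      S.δ s i op s' r → SeqRun S s' l → SeqRun S s ((i, op, r) :: l)

/-! ## Implementations, configurations and executions -/

/-- Events of an execution: high-level invocations/responses and primitive steps. -/
inductive Event (n : ℕ) (S : Spec n) : Type
  | inv (i : Fin n) (op : S.Op)
  | res (i : Fin n) (r : S.Res)
  | step (i : Fin n)

/-- The process performing an event. -/
def Event.proc {n : ℕ} {S : Spec n} : Event n S → Fin n
  | .inv i _ => i
  | .res i _ => i
  | .step i => i

/-- An implementation of the high-level object `S` for `n` processes from base objects
`M o`, `o : ι`: a deterministic state machine per process.  In local state `ℓ`,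
process `i`'s next primitive step applies `prim i ℓ` to base object `obj i ℓ` and
updates the local state with the response via `updL`; `ret i ℓ` is the response of the
current high-level operation once it is ready. -/
structure Impl (n : ℕ) (S : Spec n) (ι : Type) (M : ι → BaseObject) : Type 1 where
  Local : Fin n → Type
  initL : ∀ i, Local i
  invokeL : ∀ i, S.Op → Local i → Local i
  obj : ∀ i, Local i → ι
  prim : ∀ i (ℓ : Local i), (M (obj i ℓ)).Prim
  updL : ∀ i, Local i → List ℕ → Local i
  ret : ∀ i, Local i → Option S.Res

/-- A configuration: states of all base objects and all processes
(local state, pending operation, history of invoked operations). -/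
structure Config {n : ℕ} {S : Spec n} {ι : Type} {M : ι → BaseObject}
    (A : Impl n S ι M) : Type where
  mem : ∀ o, (M o).State
  loc : ∀ i, A.Local i
  pend : Fin n → Option S.Op
  hist : Fin n → List S.Op

open Classical in
/-- Update the state of one base object in the memory. -/
noncomputable def updMem {ι : Type} {M : ι → BaseObject}
    (mem : ∀ o, (M o).State) (o : ι) (s : (M o).State) : ∀ o', (M o').State :=
  fun o' =>
    if h : o' = o then cast (congrArg (fun x => (M x).State) h).symm s else mem o'

open Classical in
/-- The (deterministic) transition of a configuration by an event; `none` if the event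
is not enabled.  An invocation requires the process to be idle and the operation to be
allowed by the specification; a primitive step requires a pending operation whose
response is not yet ready; a response requires the response to be ready. -/
noncomputable def nextConfig {n : ℕ} {S : Spec n} {ι : Type} {M : ι → BaseObject}
    (A : Impl n S ι M) (C : Config A) : Event n S → Option (Config A)
  | .inv i op =>
    match C.pend i with
    | some _ => none
    | none =>
      if S.allowed i (C.hist i) op then
        some { C with
          pend := Function.update C.pend i (some op)
          hist := Function.update C.hist i (C.hist i ++ [op])
          loc := Function.update C.loc i (A.invokeL i op (C.loc i)) }
      else none
  | .step i =>
    match C.pend i with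
    | none => none
    | some _ =>
      if A.ret i (C.loc i) = none then
        some { C with
          mem := updMem C.mem (A.obj i (C.loc i))
            ((M (A.obj i (C.loc i))).apply (A.prim i (C.loc i))
              (C.mem (A.obj i (C.loc i)))).1
          loc := Function.update C.loc i
            (A.updL i (C.loc i)
              ((M (A.obj i (C.loc i))).apply (A.prim i (C.loc i))
                (C.mem (A.obj i (C.loc i)))).2) }
      else none
  | .res i r =>
    match C.pend i with
    | none => none
    | some _ =>
      if A.ret i (C.loc i) = some r then
        some { C with pend := Function.update C.pend i none }
      else none

/-- The initial configuration. -/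
def initConfig {n : ℕ} {S : Spec n} {ι : Type} {M : ι → BaseObject}
    (A : Impl n S ι M) : Config A :=
  { mem := fun o => (M o).init
    loc := fun i => A.initL i
    pend := fun _ => none
    hist := fun _ => [] }

/-- The configuration reached by a finite sequence of events from the initial
configuration (`none` if the sequence is not a valid execution). -/
noncomputable def execConfig {n : ℕ} {S : Spec n} {ι : Type} {M : ι → BaseObject}
    (A : Impl n S ι M) (α : List (Event n S)) : Option (Config A) :=
  α.foldlM (fun C e => nextConfig A C e) (initConfig A)

/-- `α` is a (finite) execution of the implementation `A`. -/
def IsExec {n : ℕ} {S : Spec n} {ι : Type} {M : ι → BaseObject}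
    (A : Impl n S ι M) (α : List (Event n S)) : Prop :=
  (execConfig A α).isSome = true

/-- The length-`m` prefix of an infinite sequence of events. -/
def prefE {n : ℕ} {S : Spec n} (E : ℕ → Event n S) (m : ℕ) : List (Event n S) :=
  (List.range m).map E

/-! ## Linearizability -/

/-- In execution `α`, the invocation at position `j` is matched by the response at
position `k` with output `r` (no earlier response of the same process intervening). -/
def Matches {n : ℕ} {S : Spec n} (α : List (Event n S)) (j k : ℕ) (r : S.Res) : Prop :=
  ∃ i op, α[j]? = some (Event.inv i op) ∧ α[k]? = some (Event.res i r) ∧ j < k ∧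
    ∀ m, j < m → m < k → ∀ r', α[m]? ≠ some (Event.res i r')

/-- The operation invoked at position `j` precedes (returns before the invocation of)
the operation invoked at position `j'`. -/
def Precedes {n : ℕ} {S : Spec n} (α : List (Event n S)) (j j' : ℕ) : Prop :=
  ∃ k r, Matches α j k r ∧ k < j'

/-- `σ` is a linearization of the execution `α`: a sequence of operation instances of
`α` (identified by the position of their invocation, paired with a response) that
contains every complete operation of `α` with its actual output and possibly some
pending ones, respects the real-time order of `α`, and is a valid sequential
execution of the specification. -/
structure IsLinearization {n : ℕ} (S : Spec n) (α : List (Event n S))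
    (σ : List (ℕ × S.Res)) : Prop where
  inv_mem : ∀ p ∈ σ, ∃ i op, α[p.1]? = some (Event.inv i op)
  nodup : (σ.map Prod.fst).Nodup
  complete_mem : ∀ j k r, Matches α j k r → (j, r) ∈ σ
  complete_out : ∀ j k r r', Matches α j k r → (j, r') ∈ σ → r' = r
  realtime : σ.Pairwise (fun a b => ¬ Precedes α b.1 a.1)
  valid : ∃ l : List (Fin n × S.Op × S.Res),
    List.Forall₂ (fun (p : ℕ × S.Res) (e : Fin n × S.Op × S.Res) =>
      α[p.1]? = some (Event.inv e.1 e.2.1) ∧ p.2 = e.2.2) σ l ∧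
    SeqRun S S.init l

/-- `L` is a linearization function for `A`: it maps every execution to a
linearization of it. -/
def IsLinFun {n : ℕ} {S : Spec n} {ι : Type} {M : ι → BaseObject}
    (A : Impl n S ι M) (L : List (Event n S) → List (ℕ × S.Res)) : Prop :=
  ∀ α, IsExec A α → IsLinearization S α (L α)

/-- `L` is prefix-closed: the linearization of a prefix is a prefix of the
linearization of an extension. -/
def PrefixClosedLin {n : ℕ} {S : Spec n} {ι : Type} {M : ι → BaseObject}
    (A : Impl n S ι M) (L : List (Event n S) → List (ℕ × S.Res)) : Prop :=
  ∀ α β, IsExec A (α ++ β) → L α <+: L (α ++ β)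

/-- `L` is subsequence-closed: the linearization of a prefix is a subsequence of the
linearization of an extension. -/
def SubseqClosedLin {n : ℕ} {S : Spec n} {ι : Type} {M : ι → BaseObject}
    (A : Impl n S ι M) (L : List (Event n S) → List (ℕ × S.Res)) : Prop :=
  ∀ α β, IsExec A (α ++ β) → List.Sublist (L α) (L (α ++ β))

/-- Strong linearizability: there is a prefix-closed linearization function. -/
def StronglyLinearizable {n : ℕ} {S : Spec n} {ι : Type} {M : ι → BaseObject}
    (A : Impl n S ι M) : Prop :=
  ∃ L, IsLinFun A L ∧ PrefixClosedLin A L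

/-- Decisive linearizability: there is a subsequence-closed linearization function. -/
def DecisivelyLinearizable {n : ℕ} {S : Spec n} {ι : Type} {M : ι → BaseObject}
    (A : Impl n S ι M) : Prop :=
  ∃ L, IsLinFun A L ∧ SubseqClosedLin A L

/-! ## Progress conditions -/

/-- Wait-freedom: in every infinite execution, a process that takes infinitely many
primitive steps completes infinitely many operations. -/
def WaitFree {n : ℕ} {S : Spec n} {ι : Type} {M : ι → BaseObject}
    (A : Impl n S ι M) : Prop :=
  ∀ E : ℕ → Event n S, (∀ m, IsExec A (prefE E m)) →
    ∀ i : Fin n, (∀ m, ∃ m', m ≤ m' ∧ E m' = Event.step i) →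
      ∀ m, ∃ m', m ≤ m' ∧ ∃ r, E m' = Event.res i r

/-- Lock-freedom: in every infinite execution, infinitely many operations complete. -/
def LockFree {n : ℕ} {S : Spec n} {ι : Type} {M : ι → BaseObject}
    (A : Impl n S ι M) : Prop :=
  ∀ E : ℕ → Event n S, (∀ m, IsExec A (prefE E m)) →
    ∀ m, ∃ m', m ≤ m' ∧ ∃ i r, E m' = Event.res i r

/-! ## High-level object specifications -/

/-- Queue: operation `some v` is `enqueue(v)` (returning `none`), operation `none` is
`dequeue()`, returning the oldest enqueued value not yet dequeued (`some v`) or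
`none` (empty). -/
def QueueSpec (n : ℕ) : Spec n where
  Op := Option ℕ
  Res := Option ℕ
  State := List ℕ
  init := []
  δ := fun s _ op s' r =>
    (∃ v, op = some v ∧ s' = s ++ [v] ∧ r = none) ∨
    (op = none ∧ ((s = [] ∧ s' = [] ∧ r = none) ∨ ∃ v t, s = v :: t ∧ s' = t ∧ r = some v))
  allowed := fun _ _ _ => true

/-- Stack: operation `some v` is `push(v)` (returning `none`), operation `none` is
`pop()`, returning the most recently pushed value not yet popped (`some v`) or
`none` (empty). -/
def StackSpec (n : ℕ) : Spec n where
  Op := Option ℕ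
  Res := Option ℕ
  State := List ℕ
  init := []
  δ := fun s _ op s' r =>
    (∃ v, op = some v ∧ s' = v :: s ∧ r = none) ∨
    (op = none ∧ ((s = [] ∧ s' = [] ∧ r = none) ∨ ∃ v t, s = v :: t ∧ s' = t ∧ r = some v))
  allowed := fun _ _ _ => true

/-- Operations of the (one-shot or long-lived) contest objects. -/
inductive ContestOp : Type
  | compete
  | decide

/-- The one-shot contest object for `n` processes: each competitor `p_1, …, p_{n-1}`
may invoke `compete()` once, which always returns `true`; the referee `p_0` may invoke
`decide()` once, which returns the index of the first process that executed
`compete()` (`Sum.inr i`) or `false` (`Sum.inl false`) if there is no such operation. -/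
def ContestSpec (n : ℕ) : Spec n where
  Op := ContestOp
  Res := Bool ⊕ ℕ
  State := Option (Fin n) × Bool
  init := (none, false)
  δ := fun s i op s' r =>
    (op = ContestOp.compete ∧ i.val ≠ 0 ∧ r = Sum.inl true ∧ s'.2 = s.2 ∧
      s'.1 = (match s.1 with | some j => some j | none => some i)) ∨
    (op = ContestOp.decide ∧ i.val = 0 ∧ s.2 = false ∧ s' = (s.1, true) ∧
      r = (match s.1 with | some j => Sum.inr j.val | none => Sum.inl false))
  allowed := fun i hist op =>
    hist.isEmpty &&
      (match op with
       | ContestOp.compete => i.val != 0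
       | ContestOp.decide => i.val == 0)

/-- The long-lived contest object for `n` processes: each competitor `p_1, …, p_{n-1}`
may invoke `compete()` any number of times (returning nothing, i.e. `none`); the
referee `p_0` may invoke `decide()` at most once, which returns `some x` for some
integer `x` such that every competitor has executed at most `x` operations so far. -/
def LLContestSpec (n : ℕ) : Spec n where
  Op := ContestOp
  Res := Option ℕ
  State := (Fin n → ℕ) × Bool
  init := (fun _ => 0, false)
  δ := fun s i op s' r =>
    (op = ContestOp.compete ∧ i.val ≠ 0 ∧
      s' = (Function.update s.1 i (s.1 i + 1), s.2) ∧ r = none) ∨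
    (op = ContestOp.decide ∧ i.val = 0 ∧ s.2 = false ∧ s'.2 = true ∧ s'.1 = s.1 ∧
      ∃ x : ℕ, r = some x ∧ ∀ j : Fin n, j.val ≠ 0 → s.1 j ≤ x)
  allowed := fun i hist op =>
    match op with
    | ContestOp.compete => i.val != 0
    | ContestOp.decide => (i.val == 0) && hist.isEmpty

/-- Counter: operation `true` is `increment()` (returning `none`), operation `false`
is `read()`, returning the number of increments so far. -/
def CounterSpec (n : ℕ) : Spec n where
  Op := Bool
  Res := Option ℕ
  State := ℕ
  init := 0
  δ := fun s _ op s' r =>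
    (op = true ∧ s' = s + 1 ∧ r = none) ∨ (op = false ∧ s' = s ∧ r = some s)
  allowed := fun _ _ _ => true

/-- Max register: operation `some v` is `maxWrite(v)` (returning `none`), operation
`none` is `maxRead()`, returning the largest value written so far. -/
def MaxRegSpec (n : ℕ) : Spec n where
  Op := Option ℕ
  Res := Option ℕ
  State := ℕ
  init := 0
  δ := fun s _ op s' r =>
    (∃ v, op = some v ∧ s' = max s v ∧ r = none) ∨ (op = none ∧ s' = s ∧ r = some s)
  allowed := fun _ _ _ => true

/-- Snapshot with `n` components: operation `Sum.inl (j, v)` atomically updates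
component `j` to `v` (returning `none`); operation `Sum.inr ()` is `scan()`,
atomically returning all components. -/
def SnapshotSpec (n : ℕ) : Spec n where
  Op := (Fin n × ℕ) ⊕ Unit
  Res := Option (Fin n → ℕ)
  State := Fin n → ℕ
  init := fun _ => 0
  δ := fun s _ op s' r =>
    (∃ j v, op = Sum.inl (j, v) ∧ s' = Function.update s j v ∧ r = none) ∨
    (op = Sum.inr () ∧ s' = s ∧ r = some s)
  allowed := fun _ _ _ => true

/-- Fetch&increment: atomically returns the current value and increments it. -/
def FetchIncSpec (n : ℕ) : Spec n where
  Op := Unit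
  Res := ℕ
  State := ℕ
  init := 0
  δ := fun s _ _ s' r => s' = s + 1 ∧ r = s
  allowed := fun _ _ _ => true

/-- Fetch&add: `fetch&add(v)` atomically returns the current value and adds `v`. -/
def FetchAddSpec (n : ℕ) : Spec n where
  Op := ℕ
  Res := ℕ
  State := ℕ
  init := 0
  δ := fun s _ op s' r => s' = s + op ∧ r = s
  allowed := fun _ _ _ => true

/-! ### Auxiliary development for Statement 2 -/

namespace Contest2

/-- The operation process `i` is allowed to perform. -/
def opOf (n : ℕ) (i : Fin n) : ContestOp :=
  if i.val = 0 then ContestOp.decide else ContestOp.compete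

/-- The implementation: a single `(n-1)`-window register; competitor `i` writes `i`,
the referee reads the window and returns its head (or `false` if empty). -/
def CImpl (n : ℕ) : Impl n (ContestSpec n) Unit (fun _ => WindowRegister (n - 1)) where
  Local := fun _ => Option (Bool ⊕ ℕ)
  initL := fun _ => none
  invokeL := fun _ _ _ => none
  obj := fun _ _ => ()
  prim := fun i _ => if i.val = 0 then none else some i.val
  updL := fun i _ resp =>
    if i.val = 0 then
      some (match resp with | [] => Sum.inl false | v :: _ => Sum.inr v)
    else some (Sum.inl true)
  ret := fun _ ℓ => ℓ

/-- The ghost fold computing, from an event sequence: the position of each process's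
last invocation, the sequence of values written so far, and the linearization. -/
def runf (n : ℕ) : List (Event n (ContestSpec n)) → ℕ →
    ((Fin n → Option ℕ) × List ℕ) →
    ((Fin n → Option ℕ) × List ℕ) × List (ℕ × (Bool ⊕ ℕ))
  | [], _, st => (st, [])
  | Event.inv i _ :: rest, m, st =>
      runf n rest (m + 1) (Function.update st.1 i (some m), st.2)
  | Event.res _ _ :: rest, m, st => runf n rest (m + 1) st
  | Event.step i :: rest, m, st =>
      let p : ℕ × (Bool ⊕ ℕ) :=
        ((st.1 i).getD 0,
          if i.val = 0 then
            (match st.2 with | [] => Sum.inl false | v :: _ => Sum.inr v)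
          else Sum.inl true)
      let st' := if i.val = 0 then st else (st.1, st.2 ++ [i.val])
      let q := runf n rest (m + 1) st'
      (q.1, p :: q.2)

/-- The linearization function. -/
def Lfun (n : ℕ) (α : List (Event n (ContestSpec n))) : List (ℕ × (Bool ⊕ ℕ)) :=
  (runf n α 0 (fun _ => none, [])).2

lemma runf_append (n : ℕ) (α β : List (Event n (ContestSpec n))) :
    ∀ (m : ℕ) st, runf n (α ++ β) m st =
      ((runf n β (m + α.length) (runf n α m st).1).1,
        (runf n α m st).2 ++ (runf n β (m + α.length) (runf n α m st).1).2) := by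
  induction α with
  | nil => intro m st; simp [runf]
  | cons e rest ih =>
    intro m st
    have harith : m + (rest.length + 1) = m + 1 + rest.length := by omega
    cases e with
    | inv i op =>
      simp only [List.cons_append, runf, List.length_cons, List.append_eq]
      rw [ih, harith]
    | res i r =>
      simp only [List.cons_append, runf, List.length_cons, List.append_eq]
      rw [ih, harith]
    | step i =>
      simp only [List.cons_append, runf, List.length_cons, List.append_eq]
      rw [ih, harith]

/-- Sequential runs with explicit final state. -/
inductive SeqRunTo {n : ℕ} (S : Spec n) : S.State → List (Fin n × S.Op × S.Res) → S.State → Prop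
  | nil (s : S.State) : SeqRunTo S s [] s
  | cons {s : S.State} {i : Fin n} {op : S.Op} {s' : S.State} {r : S.Res}
      {l : List (Fin n × S.Op × S.Res)} {s'' : S.State} :
      S.δ s i op s' r → SeqRunTo S s' l s'' → SeqRunTo S s ((i, op, r) :: l) s''

lemma SeqRunTo.toSeqRun {n : ℕ} {S : Spec n} {s : S.State} {l} {s' : S.State}
    (h : SeqRunTo S s l s') : SeqRun S s l := by
  induction h with
  | nil => exact SeqRun.nil _
  | cons hδ _ ih => exact SeqRun.cons hδ ih

lemma SeqRunTo.snoc {n : ℕ} {S : Spec n} {s : S.State} {l} {s' : S.State}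
    {i : Fin n} {op : S.Op} {s'' : S.State} {r : S.Res}
    (h : SeqRunTo S s l s') (hδ : S.δ s' i op s'' r) :
    SeqRunTo S s (l ++ [(i, op, r)]) s'' := by
  induction h with
  | nil => exact SeqRunTo.cons hδ (SeqRunTo.nil _)
  | cons hδ' _ ih => exact SeqRunTo.cons hδ' (ih hδ)

lemma gel_lt {γ : Type _} {l : List γ} {j : ℕ} {x : γ} (h : l[j]? = some x) :
    j < l.length := by
  by_contra hc
  rw [List.getElem?_eq_none (by omega)] at h
  simp at h

lemma gel_left {γ : Type _} {l : List γ} (l' : List γ) {j : ℕ} {x : γ}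
    (h : l[j]? = some x) : (l ++ l')[j]? = some x := by
  rw [List.getElem?_append_left (gel_lt h)]; exact h

lemma gel_last {γ : Type _} (l : List γ) (x : γ) : (l ++ [x])[l.length]? = some x := by
  rw [List.getElem?_append_right (le_refl _)]
  simp

lemma gel_single {γ : Type _} {l : List γ} {x : γ} {j : ℕ} {e : γ}
    (h : (l ++ [x])[j]? = some e) :
    (j < l.length ∧ l[j]? = some e) ∨ (j = l.length ∧ e = x) := by
  rcases lt_trichotomy j l.length with hj | hj | hj
  · left; exact ⟨hj, by rwa [List.getElem?_append_left hj] at h⟩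
  · right
    refine ⟨hj, ?_⟩
    subst hj
    rw [gel_last] at h
    exact (Option.some.inj h).symm
  · exfalso
    have := gel_lt h
    simp at this
    omega

lemma forall₂_map {γ β δ : Type _} (R : β → δ → Prop) (f : γ → β) (g : γ → δ)
    (l : List γ) (h : ∀ a ∈ l, R (f a) (g a)) : List.Forall₂ R (l.map f) (l.map g) := by
  induction l with
  | nil => simp
  | cons a l ih =>
    simp only [List.map_cons]
    exact List.Forall₂.cons (h a (by simp)) (ih (fun a ha => h a (by simp [ha])))

lemma nodup_fst_eq {γ β : Type _} {τ : List (γ × β)} (hτ : (τ.map Prod.fst).Nodup)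
    {a b : γ × β} (ha : a ∈ τ) (hb : b ∈ τ) (hfst : a.1 = b.1) : a = b := by
  have hp : τ.Pairwise (fun x y => x.1 ≠ y.1) := (List.pairwise_map.mp hτ)
  by_contra hne
  have hsym : Symmetric (fun (x y : γ × β) => x.1 ≠ y.1) := fun x y h => h.symm
  haveI : Std.Symm (fun (x y : γ × β) => x.1 ≠ y.1) := ⟨fun a b h => hsym h⟩
  exact List.Pairwise.forall hp ha hb hne hfst

lemma updMem_unit {M : Unit → BaseObject} (mem : ∀ o, (M o).State)
    (s : (M ()).State) : updMem mem () s = fun _ => s := by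
  funext o
  cases o
  simp [updMem]

lemma execConfig_append_single {n : ℕ} {S : Spec n} {ι : Type} {M : ι → BaseObject}
    (A : Impl n S ι M) (γ : List (Event n S)) (e : Event n S) :
    execConfig A (γ ++ [e]) = (execConfig A γ).bind (fun C => nextConfig A C e) := by
  simp [execConfig, List.foldlM_append, List.foldlM]

/-- The values written so far, per ghost entries. -/
def memOf (n : ℕ) (τ : List (Fin n × ℕ × ℕ × (Bool ⊕ ℕ))) : List ℕ :=
  τ.filterMap (fun t => if t.1.val = 0 then none else some t.1.val)

/-- The linearization read off ghost entries. -/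
def σOf (n : ℕ) (τ : List (Fin n × ℕ × ℕ × (Bool ⊕ ℕ))) : List (ℕ × (Bool ⊕ ℕ)) :=
  τ.map (fun t => (t.2.1, t.2.2.2))

def jOf (n : ℕ) (α : List (Event n (ContestSpec n))) : Fin n → Option ℕ :=
  (runf n α 0 (fun _ => none, [])).1.1

def mOf (n : ℕ) (α : List (Event n (ContestSpec n))) : List ℕ :=
  (runf n α 0 (fun _ => none, [])).1.2

/-- Per-process status invariant: idle / invoked / stepped / responded. -/
def PStat (n : ℕ) (α : List (Event n (ContestSpec n))) (C : Config (CImpl n))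
    (τ : List (Fin n × ℕ × ℕ × (Bool ⊕ ℕ))) (i : Fin n) : Prop :=
  (C.hist i = [] ∧ C.pend i = none ∧ C.loc i = none ∧ jOf n α i = none ∧
    (∀ t ∈ τ, t.1 ≠ i) ∧ (∀ (m : ℕ) e, α[m]? = some e → Event.proc e ≠ i))
  ∨ (∃ j, C.hist i = [opOf n i] ∧ C.pend i = some (opOf n i) ∧ C.loc i = none ∧
      jOf n α i = some j ∧ (∀ t ∈ τ, t.1 ≠ i) ∧
      α[j]? = some (Event.inv i (opOf n i)) ∧
      (∀ (m : ℕ) e, α[m]? = some e → Event.proc e = i → m = j))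
  ∨ (∃ j k r, C.hist i = [opOf n i] ∧ C.pend i = some (opOf n i) ∧ C.loc i = some r ∧
      jOf n α i = some j ∧ (i, j, k, r) ∈ τ ∧ j < k ∧
      α[j]? = some (Event.inv i (opOf n i)) ∧ α[k]? = some (Event.step i) ∧
      (∀ (m : ℕ) e, α[m]? = some e → Event.proc e = i → m = j ∨ m = k))
  ∨ (∃ j k l r, C.hist i = [opOf n i] ∧ C.pend i = none ∧ C.loc i = some r ∧
      jOf n α i = some j ∧ (i, j, k, r) ∈ τ ∧ j < k ∧ k < l ∧
      α[j]? = some (Event.inv i (opOf n i)) ∧ α[k]? = some (Event.step i) ∧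
      α[l]? = some (Event.res i r) ∧
      (∀ (m : ℕ) e, α[m]? = some e → Event.proc e = i → m = j ∨ m = k ∨ m = l))

/-- The global invariant of reachable configurations, with ghost data `τ`
(one entry `(proc, inv-position, step-position, result)` per linearized operation,
in linearization order) and `s` (the spec state reached). -/
structure GInv (n : ℕ) (α : List (Event n (ContestSpec n))) (C : Config (CImpl n))
    (τ : List (Fin n × ℕ × ℕ × (Bool ⊕ ℕ))) (s : Option (Fin n) × Bool) : Prop where
  out_eq : Lfun n α = σOf n τ
  mem_eq : mOf n α = memOf n τ
  cmem_eq : C.mem () = memOf n τ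
  procs_nodup : (τ.map Prod.fst).Nodup
  steps_sorted : τ.Pairwise (fun a b => a.2.2.1 < b.2.2.1)
  run_to : SeqRunTo (ContestSpec n) (ContestSpec n).init
      (τ.map fun t => (t.1, opOf n t.1, t.2.2.2)) s
  winner_head : match s.1 with
      | none => memOf n τ = []
      | some w => ∃ rest, memOf n τ = w.val :: rest
  decided : s.2 = τ.any (fun t => t.1.val == 0)
  status : ∀ i, PStat n α C τ i

lemma jOf_append_inv (n : ℕ) (α : List (Event n (ContestSpec n))) (i : Fin n)
    (op : ContestOp) :
    jOf n (α ++ [Event.inv i op]) = Function.update (jOf n α) i (some α.length) := by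
  unfold jOf
  rw [runf_append]
  simp [runf]

lemma mOf_append_inv (n : ℕ) (α : List (Event n (ContestSpec n))) (i : Fin n)
    (op : ContestOp) : mOf n (α ++ [Event.inv i op]) = mOf n α := by
  unfold mOf; rw [runf_append]; simp [runf]

lemma Lfun_append_inv (n : ℕ) (α : List (Event n (ContestSpec n))) (i : Fin n)
    (op : ContestOp) : Lfun n (α ++ [Event.inv i op]) = Lfun n α := by
  unfold Lfun; rw [runf_append]; simp [runf]

lemma jOf_append_res (n : ℕ) (α : List (Event n (ContestSpec n))) (i : Fin n)
    (r : Bool ⊕ ℕ) : jOf n (α ++ [Event.res i r]) = jOf n α := by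
  unfold jOf; rw [runf_append]; simp [runf]

lemma mOf_append_res (n : ℕ) (α : List (Event n (ContestSpec n))) (i : Fin n)
    (r : Bool ⊕ ℕ) : mOf n (α ++ [Event.res i r]) = mOf n α := by
  unfold mOf; rw [runf_append]; simp [runf]

lemma Lfun_append_res (n : ℕ) (α : List (Event n (ContestSpec n))) (i : Fin n)
    (r : Bool ⊕ ℕ) : Lfun n (α ++ [Event.res i r]) = Lfun n α := by
  unfold Lfun; rw [runf_append]; simp [runf]

lemma jOf_append_step (n : ℕ) (α : List (Event n (ContestSpec n))) (i : Fin n) :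
    jOf n (α ++ [Event.step i]) = jOf n α := by
  unfold jOf; rw [runf_append]
  by_cases h : i.val = 0 <;> simp [runf, h]

lemma mOf_append_step (n : ℕ) (α : List (Event n (ContestSpec n))) (i : Fin n) :
    mOf n (α ++ [Event.step i]) = if i.val = 0 then mOf n α else mOf n α ++ [i.val] := by
  unfold mOf; rw [runf_append]
  by_cases h : i.val = 0 <;> simp [runf, h]

lemma Lfun_append_step (n : ℕ) (α : List (Event n (ContestSpec n))) (i : Fin n) :
    Lfun n (α ++ [Event.step i]) = Lfun n α ++
      [((jOf n α i).getD 0,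
        if i.val = 0 then
          (match mOf n α with | [] => Sum.inl false | v :: _ => Sum.inr v)
        else Sum.inl true)] := by
  unfold Lfun
  rw [runf_append]
  by_cases h : i.val = 0 <;> simp [runf, h, jOf, mOf]

/-- Preservation of the per-process status for processes not involved in the
new event. -/
lemma PStat_mono {n : ℕ} {γ : List (Event n (ContestSpec n))}
    {e : Event n (ContestSpec n)} {C C' : Config (CImpl n)}
    {τ τ' : List (Fin n × ℕ × ℕ × (Bool ⊕ ℕ))} {i : Fin n}
    (hne : Event.proc e ≠ i)
    (hhist : C'.hist i = C.hist i) (hpend : C'.pend i = C.pend i)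
    (hloc : C'.loc i = C.loc i)
    (hj : jOf n (γ ++ [e]) i = jOf n γ i)
    (hτmem : ∀ t, t ∈ τ → t ∈ τ') (hτnew : ∀ t ∈ τ', t ∈ τ ∨ t.1 ≠ i)
    (h : PStat n γ C τ i) : PStat n (γ ++ [e]) C' τ' i := by
  have hτne : (∀ t ∈ τ, t.1 ≠ i) → ∀ t ∈ τ', t.1 ≠ i := by
    intro hold t ht
    rcases hτnew t ht with h' | h'
    · exact hold t h'
    · exact h'
  rcases h with ⟨h1, h2, h3, h4, h5, h6⟩ | ⟨j, h1, h2, h3, h4, h5, h6, h7⟩ |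
    ⟨j, k, r, h1, h2, h3, h4, h5, h6, h7, h8, h9⟩ |
    ⟨j, k, l, r, h1, h2, h3, h4, h5, h6, h7, h8, h9, h10, h11⟩
  · left
    refine ⟨hhist.trans h1, hpend.trans h2, hloc.trans h3, hj.trans h4, hτne h5, ?_⟩
    intro m e' hm
    rcases gel_single hm with ⟨_, hm'⟩ | ⟨_, he'⟩
    · exact h6 m e' hm'
    · subst he'; exact hne
  · right; left
    refine ⟨j, hhist.trans h1, hpend.trans h2, hloc.trans h3, hj.trans h4, hτne h5,
      gel_left _ h6, ?_⟩
    intro m e' hm hp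
    rcases gel_single hm with ⟨_, hm'⟩ | ⟨_, he'⟩
    · exact h7 m e' hm' hp
    · subst he'; exact absurd hp hne
  · right; right; left
    refine ⟨j, k, r, hhist.trans h1, hpend.trans h2, hloc.trans h3, hj.trans h4,
      hτmem _ h5, h6, gel_left _ h7, gel_left _ h8, ?_⟩
    intro m e' hm hp
    rcases gel_single hm with ⟨_, hm'⟩ | ⟨_, he'⟩
    · exact h9 m e' hm' hp
    · subst he'; exact absurd hp hne
  · right; right; right
    refine ⟨j, k, l, r, hhist.trans h1, hpend.trans h2, hloc.trans h3, hj.trans h4,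
      hτmem _ h5, h6, h7, gel_left _ h8, gel_left _ h9, gel_left _ h10, ?_⟩
    intro m e' hm hp
    rcases gel_single hm with ⟨_, hm'⟩ | ⟨_, he'⟩
    · exact h11 m e' hm' hp
    · subst he'; exact absurd hp hne

/-- Counting bound: if all entries of `τ` have distinct processes and `i ∉ τ`, then
at most `n - 2` values have been written. -/
lemma memOf_eq_map (n : ℕ) (τ : List (Fin n × ℕ × ℕ × (Bool ⊕ ℕ))) :
    memOf n τ = ((τ.map Prod.fst).filter (fun p => p.val ≠ 0)).map Fin.val := by
  induction τ with
  | nil => rfl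
  | cons t τ ih =>
    by_cases h : t.1.val = 0 <;>
      simp [memOf, List.filterMap_cons, List.filter_cons, h] <;>
      simpa [memOf] using ih

lemma memOf_length_le {n : ℕ} (hn : 2 ≤ n) (τ : List (Fin n × ℕ × ℕ × (Bool ⊕ ℕ)))
    (hnd : (τ.map Prod.fst).Nodup) (i : Fin n) (hi : i.val ≠ 0)
    (hiτ : ∀ t ∈ τ, t.1 ≠ i) : (memOf n τ).length ≤ n - 2 := by
  classical
  have h0 : (0 : ℕ) < n := by omega
  rw [memOf_eq_map, List.length_map]
  set ps := (τ.map Prod.fst).filter (fun p => decide (p.val ≠ 0)) with hps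
  have hndps : ps.Nodup := hnd.filter _
  have hsub : ps.toFinset ⊆ (Finset.univ.erase i).erase ⟨0, h0⟩ := by
    intro p hp
    rw [List.mem_toFinset] at hp
    have hp1 := List.of_mem_filter hp
    have hp2 := List.mem_of_mem_filter hp
    have hpne0 : p.val ≠ 0 := by simpa using hp1
    have hpnei : p ≠ i := by
      obtain ⟨t, ht, rfl⟩ := List.mem_map.mp hp2
      exact hiτ t ht
    refine Finset.mem_erase.mpr ⟨?_, Finset.mem_erase.mpr ⟨hpnei, Finset.mem_univ _⟩⟩
    intro h
    apply hpne0
    rw [h]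
  have h0i : (⟨0, h0⟩ : Fin n) ≠ i := by
    intro h
    apply hi
    rw [← h]
  calc ps.length = ps.toFinset.card := (List.toFinset_card_of_nodup hndps).symm
    _ ≤ _ := Finset.card_le_card hsub
    _ ≤ n - 2 := by
        rw [Finset.card_erase_of_mem (Finset.mem_erase.mpr ⟨h0i, Finset.mem_univ _⟩),
          Finset.card_erase_of_mem (Finset.mem_univ _), Finset.card_univ,
          Fintype.card_fin]
        omega

lemma nextConfig_inv_elim {n : ℕ} {S : Spec n} {ι : Type} {M : ι → BaseObject}
    {A : Impl n S ι M} {C C' : Config A} {i : Fin n} {op : S.Op}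
    (h : nextConfig A C (Event.inv i op) = some C') :
    C.pend i = none ∧ S.allowed i (C.hist i) op = true ∧
    C' = { C with
           pend := Function.update C.pend i (some op)
           hist := Function.update C.hist i (C.hist i ++ [op])
           loc := Function.update C.loc i (A.invokeL i op (C.loc i)) } := by
  rcases hp : C.pend i with _ | o
  · simp only [nextConfig, hp] at h
    by_cases ha : S.allowed i (C.hist i) op = true
    · simp only [ha, if_true] at h
      exact ⟨rfl, ha, (Option.some.inj h).symm⟩
    · simp only [Bool.not_eq_true] at ha
      simp [ha] at h
  · simp only [nextConfig, hp] at h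
    exact absurd h (by simp)

lemma nextConfig_step_elim {n : ℕ} {S : Spec n} {ι : Type} {M : ι → BaseObject}
    {A : Impl n S ι M} {C C' : Config A} {i : Fin n}
    (h : nextConfig A C (Event.step i) = some C') :
    (∃ op, C.pend i = some op) ∧ A.ret i (C.loc i) = none ∧
    C' = { C with
      mem := updMem C.mem (A.obj i (C.loc i))
        ((M (A.obj i (C.loc i))).apply (A.prim i (C.loc i))
          (C.mem (A.obj i (C.loc i)))).1
      loc := Function.update C.loc i
        (A.updL i (C.loc i)
          ((M (A.obj i (C.loc i))).apply (A.prim i (C.loc i))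
            (C.mem (A.obj i (C.loc i)))).2) } := by
  rcases hp : C.pend i with _ | o
  · simp only [nextConfig, hp] at h
    exact absurd h (by simp)
  · simp only [nextConfig, hp] at h
    by_cases hr : A.ret i (C.loc i) = none
    · rw [if_pos hr] at h
      exact ⟨⟨o, rfl⟩, hr, (Option.some.inj h).symm⟩
    · rw [if_neg hr] at h
      exact absurd h (by simp)

lemma nextConfig_res_elim {n : ℕ} {S : Spec n} {ι : Type} {M : ι → BaseObject}
    {A : Impl n S ι M} {C C' : Config A} {i : Fin n} {r : S.Res}
    (h : nextConfig A C (Event.res i r) = some C') :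
    (∃ op, C.pend i = some op) ∧ A.ret i (C.loc i) = some r ∧
    C' = { C with pend := Function.update C.pend i none } := by
  rcases hp : C.pend i with _ | o
  · simp only [nextConfig, hp] at h
    exact absurd h (by simp)
  · simp only [nextConfig, hp] at h
    by_cases hr : A.ret i (C.loc i) = some r
    · rw [if_pos hr] at h
      exact ⟨⟨o, rfl⟩, hr, (Option.some.inj h).symm⟩
    · rw [if_neg hr] at h
      exact absurd h (by simp)

/-- Facts about any ghost entry, derived from the per-process statuses. -/
lemma entry_facts {n : ℕ} {γ : List (Event n (ContestSpec n))} {C : Config (CImpl n)}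
    {τ : List (Fin n × ℕ × ℕ × (Bool ⊕ ℕ))} {s : Option (Fin n) × Bool}
    (hG : GInv n γ C τ s) {t : Fin n × ℕ × ℕ × (Bool ⊕ ℕ)} (ht : t ∈ τ) :
    γ[t.2.1]? = some (Event.inv t.1 (opOf n t.1)) ∧
    γ[t.2.2.1]? = some (Event.step t.1) ∧ t.2.1 < t.2.2.1 ∧
    (∀ (m : ℕ) r', γ[m]? = some (Event.res t.1 r') → t.2.2.1 < m ∧ r' = t.2.2.2) := by
  rcases hG.status t.1 with hst | hst | hst | hst
  · exact absurd rfl (hst.2.2.2.2.1 t ht)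
  · obtain ⟨j, _, _, _, _, h5, _, _⟩ := hst
    exact absurd rfl (h5 t ht)
  · obtain ⟨j, k, r, hh, hp, hl, hjO, hτm, hjk, hαj, hαk, hev⟩ := hst
    have ht' : t = (t.1, j, k, r) := nodup_fst_eq hG.procs_nodup ht hτm rfl
    rw [ht']
    refine ⟨hαj, hαk, hjk, ?_⟩
    intro m r' hm
    rcases hev m _ hm rfl with rfl | rfl
    · rw [hαj] at hm; exact absurd (Option.some.inj hm) (by simp)
    · rw [hαk] at hm; exact absurd (Option.some.inj hm) (by simp)
  · obtain ⟨j, k, l, r, hh, hp, hl, hjO, hτm, hjk, hkl, hαj, hαk, hαl, hev⟩ := hst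
    have ht' : t = (t.1, j, k, r) := nodup_fst_eq hG.procs_nodup ht hτm rfl
    rw [ht']
    refine ⟨hαj, hαk, hjk, ?_⟩
    intro m r' hm
    rcases hev m _ hm rfl with rfl | rfl | rfl
    · rw [hαj] at hm; exact absurd (Option.some.inj hm) (by simp)
    · rw [hαk] at hm; exact absurd (Option.some.inj hm) (by simp)
    · rw [hαl] at hm
      have := Option.some.inj hm
      refine ⟨hkl, ?_⟩
      cases this
      rfl

lemma main_inv (n : ℕ) (hn : 2 ≤ n) (α : List (Event n (ContestSpec n))) :
    ∀ C, execConfig (CImpl n) α = some C → ∃ τ s, GInv n α C τ s := by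
  induction α using List.reverseRecOn with
  | nil =>
    intro C hC
    have hC' : initConfig (CImpl n) = C := by
      simpa [execConfig] using hC
    subst hC'
    refine ⟨[], (ContestSpec n).init, ?_⟩
    refine { out_eq := rfl, mem_eq := rfl, cmem_eq := rfl,
             procs_nodup := by simp, steps_sorted := by simp,
             run_to := SeqRunTo.nil _, winner_head := rfl, decided := rfl,
             status := ?_ }
    intro i
    left
    refine ⟨rfl, rfl, rfl, rfl, by simp, ?_⟩
    intro m e hme
    rw [List.getElem?_nil] at hme
    simp at hme
  | append_singleton γ e ih =>
    intro C hC
    rw [execConfig_append_single] at hC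
    rcases hα : execConfig (CImpl n) γ with _ | C₀
    · rw [hα] at hC; exact absurd hC (by simp)
    rw [hα] at hC
    rw [Option.bind_some] at hC
    obtain ⟨τ, s, hG⟩ := ih C₀ hα
    cases e with
    | inv i op =>
      obtain ⟨hp0, hall, hCeq⟩ := nextConfig_inv_elim hC
      subst hCeq
      rcases hG.status i with hS | hS | hS | hS
      rotate_left
      · exfalso
        obtain ⟨j, h1, _⟩ := hS
        rw [h1] at hall
        simp [ContestSpec] at hall
      · exfalso
        obtain ⟨j, k, r, h1, _⟩ := hS
        rw [h1] at hall
        simp [ContestSpec] at hall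
      · exfalso
        obtain ⟨j, k, l, r, h1, _⟩ := hS
        rw [h1] at hall
        simp [ContestSpec] at hall
      obtain ⟨hh, hp, hl, hjO, hτi, hev⟩ := hS
      have hop : op = opOf n i := by
        rw [hh] at hall
        cases op with
        | compete =>
          have h0 : i.val ≠ 0 := by simpa [ContestSpec] using hall
          simp [opOf, h0]
          rfl
        | decide =>
          have h0 : i.val = 0 := by simpa [ContestSpec] using hall
          simp [opOf, h0]
          rfl
      subst hop
      refine ⟨τ, s, ?_⟩
      refine { out_eq := by rw [Lfun_append_inv]; exact hG.out_eq,
               mem_eq := by rw [mOf_append_inv]; exact hG.mem_eq,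
               cmem_eq := hG.cmem_eq,
               procs_nodup := hG.procs_nodup, steps_sorted := hG.steps_sorted,
               run_to := hG.run_to, winner_head := hG.winner_head,
               decided := hG.decided, status := ?_ }
      intro i'
      by_cases hii : i' = i
      · subst hii
        right; left
        refine ⟨γ.length, ?_, ?_, ?_, ?_, hτi, gel_last _ _, ?_⟩
        · show Function.update C₀.hist i'
              (C₀.hist i' ++ ([opOf n i'] : List (ContestSpec n).Op)) i'
              = ([opOf n i'] : List (ContestSpec n).Op)
          rw [Function.update_self, hh]
          rfl
        · show Function.update C₀.pend i' (some (opOf n i')) i' = some (opOf n i')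
          rw [Function.update_self]
          rfl
        · show Function.update C₀.loc i' ((CImpl n).invokeL i' (opOf n i') (C₀.loc i')) i'
            = none
          rw [Function.update_self]
          rfl
        · rw [jOf_append_inv, Function.update_self]
        · intro m e hm hpr
          rcases gel_single hm with ⟨_, hm'⟩ | ⟨hmv, _⟩
          · exact absurd hpr (hev m e hm')
          · exact hmv
      · refine PStat_mono (fun h => hii h.symm) (Function.update_of_ne hii _ _)
          (Function.update_of_ne hii _ _) (Function.update_of_ne hii _ _) ?_
          (fun t ht => ht) (fun t ht => Or.inl ht) (hG.status i')
        rw [jOf_append_inv]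
        exact Function.update_of_ne hii _ _
    | res i r =>
      obtain ⟨⟨op0, hp0⟩, hret, hCeq⟩ := nextConfig_res_elim hC
      subst hCeq
      have hloc : C₀.loc i = some r := hret
      rcases hG.status i with hS | hS | hS | hS
      · obtain ⟨_, hp, _⟩ := hS
        rw [hp] at hp0
        exact absurd hp0 (by simp)
      · obtain ⟨j, _, _, hl, _⟩ := hS
        rw [hl] at hloc
        exact absurd hloc (by simp)
      swap
      · obtain ⟨j, k, l, r', _, hp, _⟩ := hS
        rw [hp] at hp0
        exact absurd hp0 (by simp)
      obtain ⟨j, k, r₀, hh, hp, hl, hjO, hτm, hjk, hαj, hαk, hev⟩ := hS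
      have hr : r₀ = r := by
        rw [hl] at hloc
        exact Option.some.inj hloc
      subst hr
      refine ⟨τ, s, ?_⟩
      refine { out_eq := by rw [Lfun_append_res]; exact hG.out_eq,
               mem_eq := by rw [mOf_append_res]; exact hG.mem_eq,
               cmem_eq := hG.cmem_eq,
               procs_nodup := hG.procs_nodup, steps_sorted := hG.steps_sorted,
               run_to := hG.run_to, winner_head := hG.winner_head,
               decided := hG.decided, status := ?_ }
      intro i'
      by_cases hii : i' = i
      · subst hii
        right; right; right
        refine ⟨j, k, γ.length, r₀, hh, ?_, hl, ?_, hτm, hjk, gel_lt hαk,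
          gel_left _ hαj, gel_left _ hαk, gel_last _ _, ?_⟩
        · show Function.update C₀.pend i' none i' = none
          rw [Function.update_self]
        · rw [jOf_append_res]; exact hjO
        · intro m e hm hpr
          rcases gel_single hm with ⟨_, hm'⟩ | ⟨hmv, _⟩
          · rcases hev m e hm' hpr with h' | h'
            · exact Or.inl h'
            · exact Or.inr (Or.inl h')
          · exact Or.inr (Or.inr hmv)
      · refine PStat_mono (C := C₀) (fun h => hii h.symm) rfl
          (Function.update_of_ne hii _ _)
          rfl ?_ (fun t ht => ht) (fun t ht => Or.inl ht) (hG.status i')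
        rw [jOf_append_res]
    | step i =>
      obtain ⟨⟨op0, hp0⟩, hret, hCeq⟩ := nextConfig_step_elim hC
      subst hCeq
      have hloc : C₀.loc i = none := hret
      rcases hG.status i with hS | hS | hS | hS
      · obtain ⟨_, hp, _⟩ := hS
        rw [hp] at hp0
        exact absurd hp0 (by simp)
      rotate_left
      · obtain ⟨j, k, r, _, _, hl, _⟩ := hS
        rw [hl] at hloc
        exact absurd hloc (by simp)
      · obtain ⟨j, k, l, r, _, hp, _⟩ := hS
        rw [hp] at hp0
        exact absurd hp0 (by simp)
      obtain ⟨j, hh, hp, hl, hjO, hτi, hαj, hev⟩ := hS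
      have hmemv : C₀.mem () = memOf n τ := hG.cmem_eq
      by_cases h0 : i.val = 0
      · -- referee step: read
        have hprim : (CImpl n).prim i (C₀.loc i) = none := by
          simp [CImpl, h0]
          rfl
        have happ : (WindowRegister (n-1)).apply ((CImpl n).prim i (C₀.loc i))
            (C₀.mem ()) = (C₀.mem (), C₀.mem ()) := by
          rw [hprim]
          rfl
        refine ⟨τ ++ [(i, j, γ.length,
          (match memOf n τ with | [] => Sum.inl false | v :: _ => Sum.inr v))],
          (s.1, true), ?_⟩
        have hτi' : ∀ p ∈ τ.map Prod.fst, p ≠ i := by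
          intro p hp'
          obtain ⟨t, ht, rfl⟩ := List.mem_map.mp hp'
          exact hτi t ht
        have hanyF : τ.any (fun t => t.1.val == 0) = false := by
          rw [List.any_eq_false]
          intro t ht
          simp only [beq_iff_eq]
          intro hz
          exact hτi t ht (Fin.val_injective (hz.trans h0.symm))
        refine { out_eq := ?_, mem_eq := ?_, cmem_eq := ?_, procs_nodup := ?_,
                 steps_sorted := ?_, run_to := ?_, winner_head := ?_,
                 decided := ?_, status := ?_ }
        · rw [Lfun_append_step, hjO, hG.out_eq, if_pos h0, hG.mem_eq]
          simp [σOf]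
        · rw [mOf_append_step, if_pos h0, hG.mem_eq]
          simp [memOf, List.filterMap_append, h0]
        · show updMem C₀.mem () _ () = _
          rw [updMem_unit]
          show ((WindowRegister (n-1)).apply ((CImpl n).prim i (C₀.loc i))
            (C₀.mem ())).1 = _
          rw [happ, hmemv]
          simp [memOf, List.filterMap_append, h0]
          rfl
        · rw [List.map_append, List.nodup_append]
          refine ⟨hG.procs_nodup, by simp, ?_⟩
          intro a ha b hb
          simp at hb
          subst hb
          exact hτi' a ha
        · rw [List.pairwise_append]
          refine ⟨hG.steps_sorted, by simp, ?_⟩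
          intro a ha b hb
          simp at hb
          subst hb
          exact gel_lt (entry_facts hG ha).2.1
        · rw [List.map_append]
          refine SeqRunTo.snoc hG.run_to ?_
          refine Or.inr ⟨by simp [opOf, h0], h0, ?_, rfl, ?_⟩
          · rw [hG.decided, hanyF]
          · have hw := hG.winner_head
            rcases hs1 : s.1 with _ | w
            · rw [hs1] at hw
              simp only at hw
              rw [hw]
            · rw [hs1] at hw
              simp only at hw
              obtain ⟨rest, hrest⟩ := hw
              rw [hrest]
        · have hw := hG.winner_head
          have hmem' : memOf n (τ ++ [(i, j, γ.length,
              (match memOf n τ with | [] => Sum.inl false | v :: _ => Sum.inr v))])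
              = memOf n τ := by
            simp [memOf, List.filterMap_append, h0]
          rcases hs1 : s.1 with _ | w
          · rw [hs1] at hw
            simp only at hw ⊢
            rw [hmem', hw]
          · rw [hs1] at hw
            simp only at hw ⊢
            rw [hmem']
            exact hw
        · show true = _
          rw [List.any_append, hanyF]
          simp [h0]
        · intro i'
          by_cases hii : i' = i
          · subst hii
            right; right; left
            refine ⟨j, γ.length,
              (match memOf n τ with | [] => Sum.inl false | v :: _ => Sum.inr v),
              hh, hp, ?_, ?_, ?_, gel_lt hαj, gel_left _ hαj, gel_last _ _, ?_⟩
            · show Function.update C₀.loc i' _ i' = _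
              rw [Function.update_self]
              show (CImpl n).updL i' (C₀.loc i')
                ((WindowRegister (n-1)).apply ((CImpl n).prim i' (C₀.loc i'))
                  (C₀.mem ())).2 = _
              rw [happ]
              show (if i'.val = 0 then _ else _) = _
              simp [h0, hmemv]
              rfl
            · rw [jOf_append_step]; exact hjO
            · exact List.mem_append_right _ (by simp)
            · intro m e hm hpr
              rcases gel_single hm with ⟨_, hm'⟩ | ⟨hmv, _⟩
              · exact Or.inl (hev m e hm' hpr)
              · exact Or.inr hmv
          · refine PStat_mono (C := C₀) (fun h => hii h.symm) rfl rfl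
              (Function.update_of_ne hii _ _) (by rw [jOf_append_step])
              (fun t ht => List.mem_append_left _ ht) ?_ (hG.status i')
            intro t ht
            rcases List.mem_append.mp ht with h' | h'
            · exact Or.inl h'
            · right
              simp at h'
              rw [h']
              exact fun h => hii h.symm
      · -- competitor step: write
        have hprim : (CImpl n).prim i (C₀.loc i) = some i.val := by
          simp [CImpl, h0]
          rfl
        have hlen : (memOf n τ).length ≤ n - 2 :=
          memOf_length_le hn τ hG.procs_nodup i h0 hτi
        have happ : (WindowRegister (n-1)).apply ((CImpl n).prim i (C₀.loc i))
            (C₀.mem ()) = (memOf n τ ++ [i.val], ([] : List ℕ)) := by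
          rw [hprim, hmemv]
          show ((memOf n τ ++ [i.val]).drop ((memOf n τ).length + 1 - (n-1)),
            ([] : List ℕ)) = _
          have hz : (memOf n τ).length + 1 - (n-1) = 0 := by omega
          rw [hz, List.drop_zero]
        refine ⟨τ ++ [(i, j, γ.length, Sum.inl true)],
          ((match s.1 with | some w => some w | none => some i), s.2), ?_⟩
        have hτi' : ∀ p ∈ τ.map Prod.fst, p ≠ i := by
          intro p hp'
          obtain ⟨t, ht, rfl⟩ := List.mem_map.mp hp'
          exact hτi t ht
        have hmem' : memOf n (τ ++ [(i, j, γ.length, Sum.inl true)])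
            = memOf n τ ++ [i.val] := by
          simp [memOf, List.filterMap_append, h0]
        refine { out_eq := ?_, mem_eq := ?_, cmem_eq := ?_, procs_nodup := ?_,
                 steps_sorted := ?_, run_to := ?_, winner_head := ?_,
                 decided := ?_, status := ?_ }
        · rw [Lfun_append_step, hjO, hG.out_eq, if_neg h0]
          simp [σOf]
        · rw [mOf_append_step, if_neg h0, hG.mem_eq, hmem']
        · show updMem C₀.mem () _ () = _
          rw [updMem_unit]
          show ((WindowRegister (n-1)).apply ((CImpl n).prim i (C₀.loc i))
            (C₀.mem ())).1 = _
          rw [happ, hmem']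
        · rw [List.map_append, List.nodup_append]
          refine ⟨hG.procs_nodup, by simp, ?_⟩
          intro a ha b hb
          simp at hb
          subst hb
          exact hτi' a ha
        · rw [List.pairwise_append]
          refine ⟨hG.steps_sorted, by simp, ?_⟩
          intro a ha b hb
          simp at hb
          subst hb
          exact gel_lt (entry_facts hG ha).2.1
        · rw [List.map_append]
          refine SeqRunTo.snoc hG.run_to ?_
          exact Or.inl ⟨by simp [opOf, h0], h0, rfl, rfl, rfl⟩
        · have hw := hG.winner_head
          rcases hs1 : s.1 with _ | w
          · rw [hs1] at hw
            simp only at hw ⊢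
            exact ⟨[], by rw [hmem', hw]; rfl⟩
          · rw [hs1] at hw
            simp only at hw ⊢
            obtain ⟨rest, hrest⟩ := hw
            exact ⟨rest ++ [i.val], by rw [hmem', hrest]; rfl⟩
        · show s.2 = _
          rw [List.any_append, hG.decided]
          have : (i.val == 0) = false := by simp [h0]
          simp [this]
        · intro i'
          by_cases hii : i' = i
          · subst hii
            right; right; left
            refine ⟨j, γ.length, Sum.inl true,
              hh, hp, ?_, ?_, ?_, gel_lt hαj, gel_left _ hαj, gel_last _ _, ?_⟩
            · show Function.update C₀.loc i' _ i' = _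
              rw [Function.update_self]
              show (CImpl n).updL i' (C₀.loc i')
                ((WindowRegister (n-1)).apply ((CImpl n).prim i' (C₀.loc i'))
                  (C₀.mem ())).2 = _
              rw [happ]
              show (if i'.val = 0 then _ else _) = _
              simp [h0]
              rfl
            · rw [jOf_append_step]; exact hjO
            · exact List.mem_append_right _ (by simp)
            · intro m e hm hpr
              rcases gel_single hm with ⟨_, hm'⟩ | ⟨hmv, _⟩
              · exact Or.inl (hev m e hm' hpr)
              · exact Or.inr hmv
          · refine PStat_mono (C := C₀) (fun h => hii h.symm) rfl rfl
              (Function.update_of_ne hii _ _) (by rw [jOf_append_step])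
              (fun t ht => List.mem_append_left _ ht) ?_ (hG.status i')
            intro t ht
            rcases List.mem_append.mp ht with h' | h'
            · exact Or.inl h'
            · right
              simp at h'
              rw [h']
              exact fun h => hii h.symm

end Contest2

/-- For every number of processes `n ≥ 2`, there is a wait-free
strongly linearizable implementation of the one-shot contest object using
`(n-1)`-window registers. -/
theorem contest_from_window_registers :
    ∀ n : ℕ, 2 ≤ n →
    ∃ (ι : Type) (A : Impl n (ContestSpec n) ι (fun _ => WindowRegister (n - 1))),
      WaitFree A ∧ StronglyLinearizable A := by
  intro n hn
  classical
  refine ⟨Unit, Contest2.CImpl n, ?_, ?_⟩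
  ·
    intro E hexec i hsteps m
    exfalso
    obtain ⟨m1, _, hm1⟩ := hsteps 0
    obtain ⟨m2, hm2le, hm2⟩ := hsteps (m1 + 1)
    have hex : IsExec (Contest2.CImpl n) (prefE E (m2 + 1)) := hexec (m2 + 1)
    obtain ⟨C, hC⟩ := Option.isSome_iff_exists.mp hex
    obtain ⟨τ, s, hG⟩ := Contest2.main_inv n hn (prefE E (m2 + 1)) C hC
    have hα1 : (prefE E (m2 + 1))[m1]? = some (Event.step i) := by
      show ((List.range (m2 + 1)).map E)[m1]? = _
      rw [List.getElem?_map, List.getElem?_range (by omega), Option.map_some, hm1]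
    have hα2 : (prefE E (m2 + 1))[m2]? = some (Event.step i) := by
      show ((List.range (m2 + 1)).map E)[m2]? = _
      rw [List.getElem?_map, List.getElem?_range (by omega), Option.map_some, hm2]
    rcases hG.status i with hS | hS | hS | hS
    · exact hS.2.2.2.2.2 m1 _ hα1 rfl
    · obtain ⟨j, _, _, _, _, _, hαj, hev⟩ := hS
      have e1 := hev m1 _ hα1 rfl
      rw [e1, hαj] at hα1
      simp at hα1
    · obtain ⟨j, k, r, _, _, _, _, _, _, hαj, hαk, hev⟩ := hS
      have e1 := hev m1 _ hα1 rfl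
      have e2 := hev m2 _ hα2 rfl
      rcases e1 with e1 | e1
      · rw [e1, hαj] at hα1; simp at hα1
      rcases e2 with e2 | e2
      · rw [← e2] at hαj; rw [hα2] at hαj; simp at hαj
      omega
    · obtain ⟨j, k, l, r, _, _, _, _, _, _, _, hαj, hαk, hαl, hev⟩ := hS
      have e1 := hev m1 _ hα1 rfl
      have e2 := hev m2 _ hα2 rfl
      rcases e1 with e1 | e1 | e1
      · rw [e1, hαj] at hα1; simp at hα1
      rotate_left
      · rw [e1, hαl] at hα1; simp at hα1
      rcases e2 with e2 | e2 | e2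
      · rw [← e2] at hαj; rw [hα2] at hαj; simp at hαj
      · omega
      · rw [← e2] at hαl; rw [hα2] at hαl; simp at hαl
  · -- Strong linearizability via the fold linearization function.
    refine ⟨Contest2.Lfun n, ?_, ?_⟩
    · intro α hex
      obtain ⟨C, hC⟩ := Option.isSome_iff_exists.mp hex
      obtain ⟨τ, s, hG⟩ := Contest2.main_inv n hn α C hC
      rw [hG.out_eq]
      have hmatch : ∀ j k r, Matches α j k r →
          ∃ t, t ∈ τ ∧ t.2.1 = j ∧ t.2.2.2 = r := by
        intro j k r hM
        obtain ⟨i, op, hj, hk, hjk, hbet⟩ := hM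
        rcases hG.status i with hS | hS | hS | hS
        · exact absurd rfl (hS.2.2.2.2.2 k _ hk)
        · obtain ⟨j', _, _, _, _, _, hαj', hev⟩ := hS
          have hkj := hev k _ hk rfl
          rw [hkj, hαj'] at hk
          simp at hk
        · obtain ⟨j', k', r₀, _, _, _, _, _, _, hαj', hαk', hev⟩ := hS
          rcases hev k _ hk rfl with h' | h'
          · rw [h', hαj'] at hk; simp at hk
          · rw [h', hαk'] at hk; simp at hk
        · obtain ⟨j', k', l', r₀, _, _, _, _, hτm, _, _, hαj', hαk', hαl', hev⟩ := hS
          have hrr : r = r₀ := by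
            rcases hev k _ hk rfl with h' | h' | h'
            · rw [h', hαj'] at hk; simp at hk
            · rw [h', hαk'] at hk; simp at hk
            · rw [h', hαl'] at hk
              injection Option.some.inj hk with h1 h2
              exact h2.symm
          have hjj : j = j' := by
            rcases hev j _ hj rfl with h' | h' | h'
            · exact h'
            · rw [h', hαk'] at hj; simp at hj
            · rw [h', hαl'] at hj; simp at hj
          exact ⟨(i, j', k', r₀), hτm, hjj.symm, hrr.symm⟩
      refine { inv_mem := ?_, nodup := ?_, complete_mem := ?_, complete_out := ?_,
               realtime := ?_, valid := ?_ }
      · intro p hp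
        obtain ⟨t, ht, rfl⟩ := List.mem_map.mp hp
        exact ⟨t.1, Contest2.opOf n t.1, (Contest2.entry_facts hG ht).1⟩
      · have hτnd : τ.Nodup := hG.procs_nodup.of_map
        show ((τ.map fun t => (t.2.1, t.2.2.2)).map Prod.fst).Nodup
        simp only [List.map_map]
        refine List.Nodup.map_on ?_ hτnd
        intro a ha b hb heq
        have heq' : a.2.1 = b.2.1 := heq
        have f1 := (Contest2.entry_facts hG ha).1
        have f2 := (Contest2.entry_facts hG hb).1
        rw [heq', f2] at f1
        injection Option.some.inj f1 with h1 h2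
        exact Contest2.nodup_fst_eq hG.procs_nodup ha hb h1.symm
      · intro j k r hM
        obtain ⟨t, ht, ht2, ht3⟩ := hmatch j k r hM
        exact List.mem_map.mpr ⟨t, ht, by rw [ht2, ht3]; rfl⟩
      · intro j k r r' hM hmem
        obtain ⟨t, ht, ht2, ht3⟩ := hmatch j k r hM
        obtain ⟨u, hu, hueq⟩ := List.mem_map.mp hmem
        have h1 : u.2.1 = j := congrArg Prod.fst hueq
        have h2 : u.2.2.2 = r' := congrArg Prod.snd hueq
        have f1 := (Contest2.entry_facts hG ht).1
        have f2 := (Contest2.entry_facts hG hu).1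
        rw [h1] at f2
        rw [ht2, f2] at f1
        injection Option.some.inj f1 with hfst _
        have : u = t := Contest2.nodup_fst_eq hG.procs_nodup hu ht hfst
        rw [← h2, this, ht3]
      · show ((τ.map fun t => (t.2.1, t.2.2.2)).Pairwise
          (fun (a b : ℕ × (Bool ⊕ ℕ)) => ¬ Precedes α b.1 a.1))
        rw [List.pairwise_map]
        refine hG.steps_sorted.imp_of_mem ?_
        intro a b ha hb hab
        intro ⟨kr, r, hM, hlt⟩
        obtain ⟨i, op, hjb, hkr, _, _⟩ := hM
        have hb1 := (Contest2.entry_facts hG hb).1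
        rw [hjb] at hb1
        injection Option.some.inj hb1 with hib _
        subst hib
        have hres := ((Contest2.entry_facts hG hb).2.2.2 kr r hkr).1
        have hfa := (Contest2.entry_facts hG ha).2.2.1
        omega
      · refine ⟨τ.map (fun t => (t.1, Contest2.opOf n t.1, t.2.2.2)), ?_,
          (hG.run_to).toSeqRun⟩
        exact Contest2.forall₂_map _ _ _ τ
          (fun t ht => ⟨(Contest2.entry_facts hG ht).1, rfl⟩)
    · intro α β hex
      refine ⟨(Contest2.runf n β (0 + α.length)
        (Contest2.runf n α 0 (fun _ => none, [])).1).2, ?_⟩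
      show Contest2.Lfun n α ++ _ = Contest2.Lfun n (α ++ β)
      unfold Contest2.Lfun
      rw [Contest2.runf_append]
end

section
/- A single instance of any lock-free strongly linearizable queue implementation can be used to obtain a wait-free strongly linearizable implementation of the one-shot contest object for n ≥ 2 processes. -/
set_option autoImplicit false

/-! ## Auxiliary constructions for the proof -/

section ContestFromQueue

variable {n : ℕ} {ι : Type} {M : ι → BaseObject} (B : Impl n (QueueSpec n) ι M)

/-- Translate a contest operation of process `i` to a queue operation. -/
def opT (i : Fin n) : ContestOp → Option ℕ
  | .compete => some i.val
  | .decide => none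

/-- Translate a queue response of process `i` to a contest response. -/
def trr (i : Fin n) (r : Option ℕ) : Bool ⊕ ℕ :=
  if i.val = 0 then (match r with | none => Sum.inl false | some v => Sum.inr v)
  else Sum.inl true

/-- The contest implementation: competitor `i` enqueues `i`, the referee dequeues. -/
def mkA : Impl n (ContestSpec n) ι M where
  Local := B.Local
  initL := B.initL
  invokeL := fun i op ℓ => B.invokeL i (opT i op) ℓ
  obj := B.obj
  prim := B.prim
  updL := B.updL
  ret := fun i ℓ => (B.ret i ℓ).map (trr i)

/-- Translate configurations of `mkA B` to configurations of `B`. -/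
def ψc (C : Config (mkA B)) : Config B where
  mem := C.mem
  loc := C.loc
  pend := fun i => (C.pend i).map (opT i)
  hist := fun i => (C.hist i).map (opT i)

/-- Head translation of a single event, given the current configuration. -/
noncomputable def hdT (C : Config (mkA B)) : Event n (ContestSpec n) → Event n (QueueSpec n)
  | .inv i op => .inv i (opT i op)
  | .step i => .step i
  | .res i _ => .res i ((B.ret i (C.loc i)).getD none)

/-- Translate an execution of `mkA B` to an execution of `B`, threading the
configuration. -/
noncomputable def goPhi : Config (mkA B) → List (Event n (ContestSpec n)) →
    List (Event n (QueueSpec n))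
  | _, [] => []
  | C, e :: rest =>
    hdT B C e ::
      goPhi (match nextConfig (mkA B) C e with | some C' => C' | none => C) rest

/-- The event-wise relation between an execution of `mkA B` and its translation. -/
def evRel (e : Event n (ContestSpec n)) (e' : Event n (QueueSpec n)) : Prop :=
  (∃ i op, e = .inv i op ∧ e' = .inv i (opT i op)) ∨
  (∃ i, e = .step i ∧ e' = .step i) ∨
  (∃ i rB, e' = .res i rB ∧ e = .res i (trr i rB))

lemma goPhi_cons {C C1 : Config (mkA B)} {e : Event n (ContestSpec n)}
    {t : List (Event n (ContestSpec n))} (hn : nextConfig (mkA B) C e = some C1) :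
    goPhi B C (e :: t) = hdT B C e :: goPhi B C1 t := by
  simp only [goPhi, hn]

lemma goPhi_length : ∀ (C : Config (mkA B)) (α : List (Event n (ContestSpec n))),
    (goPhi B C α).length = α.length := by
  intro C α
  induction α generalizing C with
  | nil => rfl
  | cons e t ih => simp [goPhi, ih]

lemma execConfig_append {n' : ℕ} {S : Spec n'} {ι' : Type} {M' : ι' → BaseObject}
    (A' : Impl n' S ι' M') (α β : List (Event n' S)) :
    execConfig A' (α ++ β) = (execConfig A' α).bind
      (fun C => β.foldlM (fun C e => nextConfig A' C e) C) := by
  unfold execConfig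
  rw [List.foldlM_append]
  rfl

lemma isExec_prefix {n' : ℕ} {S : Spec n'} {ι' : Type} {M' : ι' → BaseObject}
    (A' : Impl n' S ι' M') (α β : List (Event n' S)) (h : IsExec A' (α ++ β)) :
    IsExec A' α := by
  unfold IsExec at *
  rw [execConfig_append] at h
  cases hc : execConfig A' α with
  | none => rw [hc] at h; simp at h
  | some C => simp

lemma goPhi_append (C D : Config (mkA B)) (α β : List (Event n (ContestSpec n)))
    (h : α.foldlM (fun C e => nextConfig (mkA B) C e) C = some D) :
    goPhi B C (α ++ β) = goPhi B C α ++ goPhi B D β := by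
  induction α generalizing C with
  | nil => obtain rfl := Option.some.inj h; rfl
  | cons e t ih =>
    rw [List.foldlM_cons] at h
    cases hn : nextConfig (mkA B) C e with
    | none => rw [hn] at h; simp at h
    | some C1 =>
      rw [hn] at h
      replace h : t.foldlM (fun C e => nextConfig (mkA B) C e) C1 = some D := h
      rw [List.cons_append, goPhi_cons B hn, goPhi_cons B hn, ih C1 h, List.cons_append]

lemma Config.ext' {n' : ℕ} {S : Spec n'} {ι' : Type} {M' : ι' → BaseObject}
    {A' : Impl n' S ι' M'} {C1 C2 : Config A'} (h1 : C1.mem = C2.mem)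
    (h2 : C1.loc = C2.loc) (h3 : C1.pend = C2.pend) (h4 : C1.hist = C2.hist) :
    C1 = C2 := by
  cases C1; cases C2
  cases h1; cases h2; cases h3; cases h4
  rfl

/-- One-step simulation. -/
lemma sim_step {C C1 : Config (mkA B)} {e : Event n (ContestSpec n)}
    (hn : nextConfig (mkA B) C e = some C1) :
    nextConfig B (ψc B C) (hdT B C e) = some (ψc B C1) ∧ evRel e (hdT B C e) := by
  cases e with
  | inv i op =>
    simp only [nextConfig] at hn
    cases hp : C.pend i with
    | some op' => rw [hp] at hn; cases hn
    | none =>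
      rw [hp] at hn
      split_ifs at hn with hall
      obtain rfl := Option.some.inj hn
      have hpend : (ψc B C).pend i = none := by simp [ψc, hp]; rfl
      constructor
      · simp only [hdT, nextConfig, hpend]
        have : (QueueSpec n).allowed i ((ψc B C).hist i) (opT i op) = true := rfl
        rw [if_pos this]
        refine congrArg some (Config.ext' rfl rfl ?_ ?_)
        · funext j
          by_cases hj : j = i
          · subst hj; simp [ψc, Function.update_self]; rfl
          · simp [ψc, Function.update_of_ne hj]
        · funext j
          by_cases hj : j = i
          · subst hj; simp [ψc, Function.update_self]; exact (List.map_append (f := opT j) (l₂ := [op])).symm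
          · simp [ψc, Function.update_of_ne hj]
      · exact Or.inl ⟨i, op, rfl, rfl⟩
  | step i =>
    simp only [nextConfig] at hn
    cases hp : C.pend i with
    | none => rw [hp] at hn; cases hn
    | some op' =>
      rw [hp] at hn
      split_ifs at hn with hret
      obtain rfl := Option.some.inj hn
      have hretB : B.ret i (C.loc i) = none := by
        have : ((B.ret i (C.loc i)).map (trr i)) = none := hret
        exact Option.map_eq_none_iff.mp this
      have hpend : (ψc B C).pend i = some (opT i op') := by simp [ψc, hp]; rfl
      constructor
      · simp only [hdT, nextConfig, hpend]
        rw [if_pos (show B.ret i ((ψc B C).loc i) = none from hretB)]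
        exact congrArg some (Config.ext' rfl rfl rfl rfl)
      · exact Or.inr (Or.inl ⟨i, rfl, rfl⟩)
  | res i r =>
    simp only [nextConfig] at hn
    cases hp : C.pend i with
    | none => rw [hp] at hn; cases hn
    | some op' =>
      rw [hp] at hn
      split_ifs at hn with hret
      obtain rfl := Option.some.inj hn
      have hret' : ((B.ret i (C.loc i)).map (trr i)) = some r := hret
      obtain ⟨rB, hrB, htr⟩ := Option.map_eq_some_iff.mp hret'
      have hpend : (ψc B C).pend i = some (opT i op') := by simp [ψc, hp]; rfl
      have hhd : hdT B C (Event.res i r) = Event.res i rB := by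
        simp [hdT, hrB]; rfl
      rw [hhd]
      constructor
      · simp only [nextConfig, hpend]
        rw [if_pos (show B.ret i ((ψc B C).loc i) = @some (QueueSpec n).Res rB from hrB)]
        refine congrArg some (Config.ext' rfl rfl ?_ rfl)
        funext j
        by_cases hj : j = i
        · subst hj; simp [ψc, Function.update_self]; rfl
        · simp [ψc, Function.update_of_ne hj]
      · exact Or.inr (Or.inr ⟨i, rB, rfl, by rw [htr]⟩)

/-- The key simulation lemma. -/
lemma sim : ∀ (α : List (Event n (ContestSpec n))) (C D : Config (mkA B)),
    α.foldlM (fun C e => nextConfig (mkA B) C e) C = some D →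
    (goPhi B C α).foldlM (fun C e => nextConfig B C e) (ψc B C) = some (ψc B D) ∧
    List.Forall₂ evRel α (goPhi B C α) := by
  intro α
  induction α with
  | nil =>
    intro C D h
    obtain rfl := Option.some.inj h
    exact ⟨rfl, List.Forall₂.nil⟩
  | cons e t ih =>
    intro C D h
    rw [List.foldlM_cons] at h
    cases hn : nextConfig (mkA B) C e with
    | none => rw [hn] at h; simp at h
    | some C1 =>
      rw [hn] at h
      replace h : t.foldlM (fun C e => nextConfig (mkA B) C e) C1 = some D := h
      obtain ⟨hstep, hrel⟩ := sim_step B hn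
      obtain ⟨ih1, ih2⟩ := ih C1 D h
      rw [goPhi_cons B hn]
      refine ⟨?_, List.Forall₂.cons hrel ih2⟩
      rw [List.foldlM_cons, hstep]
      exact ih1

/-- Predicate: event is an invocation by `i`. -/
def pinv (i : Fin n) : Event n (ContestSpec n) → Bool
  | .inv i' _ => i' == i
  | _ => false

/-- Predicate: event is a response by `i`. -/
def pres (i : Fin n) : Event n (ContestSpec n) → Bool
  | .res i' _ => i' == i
  | _ => false

lemma mem_of_getElem?' {γ : Type*} {L : List γ} {j : ℕ} {x : γ} (h : L[j]? = some x) :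
    x ∈ L := by
  obtain ⟨hlt, he⟩ := List.getElem?_eq_some_iff.mp h
  exact he ▸ List.getElem_mem hlt

lemma two_le_countP {γ : Type*} (L : List γ) (p : γ → Bool) (j k : ℕ) (hjk : j < k)
    (x y : γ) (hx : L[j]? = some x) (hy : L[k]? = some y) (hpx : p x) (hpy : p y) :
    2 ≤ L.countP p := by
  have hsplit : L = L.take (j+1) ++ L.drop (j+1) := (List.take_append_drop (j+1) L).symm
  have hxmem : x ∈ L.take (j+1) := by
    apply mem_of_getElem?' (j := j)
    rw [List.getElem?_take, if_pos (Nat.lt_succ_self j)]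
    exact hx
  have hymem : y ∈ L.drop (j+1) := by
    apply mem_of_getElem?' (j := k - (j+1))
    rw [List.getElem?_drop]
    have : j + 1 + (k - (j+1)) = k := by omega
    rw [this]; exact hy
  have h1 : 0 < (L.take (j+1)).countP p := List.countP_pos_iff.mpr ⟨x, hxmem, hpx⟩
  have h2 : 0 < (L.drop (j+1)).countP p := List.countP_pos_iff.mpr ⟨y, hymem, hpy⟩
  have : L.countP p = (L.take (j+1)).countP p + (L.drop (j+1)).countP p := by
    conv_lhs => rw [hsplit]
    exact List.countP_append
  omega

lemma countP_le_one_of_unique {γ : Type*} (L : List γ) (p : γ → Bool)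
    (h : ∀ (j k : ℕ) (x y : γ), L[j]? = some x → L[k]? = some y → p x → p y → j = k) :
    L.countP p ≤ 1 := by
  induction L with
  | nil => simp
  | cons a t ih =>
    rw [List.countP_cons]
    by_cases hpa : p a
    · have ht : t.countP p = 0 := by
        rw [List.countP_eq_zero]
        intro x hx hpx
        obtain ⟨k, hk, he⟩ := List.mem_iff_getElem.mp hx
        have h1 : (a :: t)[k+1]? = some x := by
          rw [List.getElem?_cons_succ]
          exact List.getElem?_eq_some_iff.mpr ⟨hk, he⟩
        have := h (k+1) 0 x a h1 (by simp) hpx hpa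
        omega
      simp [hpa, ht]
    · simp only [hpa, if_false, Bool.false_eq_true, cond_false]
      rw [Nat.add_zero]
      apply ih
      intro j k x y h1 h2 px py
      have := h (j+1) (k+1) x y (by simpa using h1) (by simpa using h2) px py
      omega

lemma allowed_props {i : Fin n} {hst : List ((ContestSpec n).Op)} {op : (ContestSpec n).Op}
    (hall : (ContestSpec n).allowed i hst op = true) :
    hst = [] ∧ (op = ContestOp.compete → i.val ≠ 0) ∧ (op = ContestOp.decide → i.val = 0) := by
  cases op with
  | compete =>
    have hall' : (hst.isEmpty && (i.val != 0)) = true := hall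
    rw [Bool.and_eq_true] at hall'
    refine ⟨List.isEmpty_iff.mp hall'.1, fun _ => ?_, fun h => ContestOp.noConfusion h⟩
    simpa using hall'.2
  | decide =>
    have hall' : (hst.isEmpty && (i.val == 0)) = true := hall
    rw [Bool.and_eq_true] at hall'
    refine ⟨List.isEmpty_iff.mp hall'.1, fun h => ContestOp.noConfusion h, fun _ => ?_⟩
    simpa using hall'.2

/-- The counting invariant: in any execution of an implementation of the contest
object, each process invokes at most one operation and responds at most once. -/
lemma countInv (A' : Impl n (ContestSpec n) ι M) :
    ∀ (α : List (Event n (ContestSpec n))) (C : Config A'),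
    execConfig A' α = some C → ∀ i : Fin n,
      α.countP (pinv i) = (C.hist i).length ∧
      α.countP (pres i) + (if (C.pend i).isSome then 1 else 0) = α.countP (pinv i) ∧
      (C.hist i).length ≤ 1 := by
  intro α
  induction α using List.reverseRecOn with
  | nil =>
    intro C h i
    obtain rfl := Option.some.inj h
    simp [initConfig]
  | append_singleton α e ih =>
    intro C h i
    rw [execConfig_append] at h
    cases hc : execConfig A' α with
    | none => rw [hc] at h; simp at h
    | some C0 =>
      rw [hc] at h
      replace h : nextConfig A' C0 e = some C := by
        have h' : (List.foldlM (fun C e => nextConfig A' C e) C0 [e]) = some C := h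
        simpa using h'
      obtain ⟨h1, h2, h3⟩ := ih C0 hc i
      have hca : ∀ p : Event n (ContestSpec n) → Bool,
          (α ++ [e]).countP p = α.countP p + (if p e then 1 else 0) := by
        intro p
        rw [List.countP_append]
        simp [List.countP_cons]
      cases e with
      | inv i' op =>
        simp only [nextConfig] at h
        cases hp : C0.pend i' with
        | some _ => rw [hp] at h; cases h
        | none =>
          rw [hp] at h
          split_ifs at h with hall
          obtain rfl := Option.some.inj h
          obtain ⟨hemp, -, -⟩ := allowed_props (n := n) hall
          by_cases hi : i' = i
          · subst hi
            have hpi : pinv i' (Event.inv i' op) = true := by simp [pinv]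
            have hpr : pres i' (Event.inv i' op) = false := by simp [pres]
            have h2' : α.countP (pres i') = α.countP (pinv i') := by
              rw [hp] at h2
              simpa using h2
            refine ⟨?_, ?_, ?_⟩ <;> dsimp only <;>
              simp only [Function.update_self]
            · rw [hca, hpi, if_pos rfl, h1, hemp]
              simp
            · rw [hca, hca, hpi, hpr]
              simp [h2']
            · rw [hemp]
              simp
          · have hii : i ≠ i' := fun hh => hi hh.symm
            have hpi : pinv i (Event.inv i' op) = false := by simp [pinv, hi]
            have hpr : pres i (Event.inv i' op) = false := by simp [pres]
            refine ⟨?_, ?_, ?_⟩ <;> dsimp only <;>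
              simp only [Function.update_of_ne hii]
            · rw [hca, hpi]
              simp [h1]
            · rw [hca, hca, hpi, hpr]
              simp [h2]
            · exact h3
      | step i' =>
        simp only [nextConfig] at h
        cases hp : C0.pend i' with
        | none => rw [hp] at h; cases h
        | some op' =>
          rw [hp] at h
          split_ifs at h with hret
          obtain rfl := Option.some.inj h
          have hpi : pinv i (Event.step i') = false := rfl
          have hpr : pres i (Event.step i') = false := rfl
          refine ⟨?_, ?_, ?_⟩ <;> dsimp only
          · rw [hca, hpi]
            simp [h1]
          · rw [hca, hca, hpi, hpr]
            simp [h2]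
          · exact h3
      | res i' r =>
        simp only [nextConfig] at h
        cases hp : C0.pend i' with
        | none => rw [hp] at h; cases h
        | some op' =>
          rw [hp] at h
          split_ifs at h with hret
          obtain rfl := Option.some.inj h
          by_cases hi : i' = i
          · subst hi
            have hpi : pinv i' (Event.res i' r) = false := by simp [pinv]
            have hpr : pres i' (Event.res i' r) = true := by simp [pres]
            have h2' : α.countP (pres i') + 1 = α.countP (pinv i') := by
              rw [hp] at h2
              simpa using h2
            refine ⟨?_, ?_, ?_⟩ <;> dsimp only <;>
              (try simp only [Function.update_self])
            · rw [hca, hpi]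
              simp [h1]
            · rw [hca, hca, hpi, hpr]
              simp
              omega
            · exact h3
          · have hii : i ≠ i' := fun hh => hi hh.symm
            have hpi : pinv i (Event.res i' r) = false := by simp [pinv]
            have hpr : pres i (Event.res i' r) = false := by simp [pres, hi]
            refine ⟨?_, ?_, ?_⟩ <;> dsimp only <;>
              (try simp only [Function.update_of_ne hii])
            · rw [hca, hpi]
              simp [h1]
            · rw [hca, hca, hpi, hpr]
              simp [h2]
            · exact h3

lemma forall₂_get?_left {γ δ : Type*} {R : γ → δ → Prop} {l1 : List γ} {l2 : List δ}
    (h : List.Forall₂ R l1 l2) {j : ℕ} {x : γ} (hx : l1[j]? = some x) :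
    ∃ y, l2[j]? = some y ∧ R x y := by
  obtain ⟨h1, he⟩ := List.getElem?_eq_some_iff.mp hx
  have h2 : j < l2.length := h.length_eq ▸ h1
  refine ⟨l2[j], List.getElem?_eq_some_iff.mpr ⟨h2, rfl⟩, ?_⟩
  have := h.get (i := j) h1 h2
  simpa [he] using this

lemma forall₂_get?_right {γ δ : Type*} {R : γ → δ → Prop} {l1 : List γ} {l2 : List δ}
    (h : List.Forall₂ R l1 l2) {j : ℕ} {y : δ} (hy : l2[j]? = some y) :
    ∃ x, l1[j]? = some x ∧ R x y := by
  obtain ⟨h2, he⟩ := List.getElem?_eq_some_iff.mp hy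
  have h1 : j < l1.length := h.length_eq.symm ▸ h2
  refine ⟨l1[j], List.getElem?_eq_some_iff.mpr ⟨h1, rfl⟩, ?_⟩
  have := h.get (i := j) h1 h2
  simpa [he] using this

variable {α : List (Event n (ContestSpec n))} {α' : List (Event n (QueueSpec n))}

lemma corr_inv_fwd (hF : List.Forall₂ evRel α α') {j : ℕ} {i : Fin n} {op : ContestOp}
    (hj : α[j]? = some (Event.inv i op)) :
    α'[j]? = some (Event.inv i (opT i op)) := by
  obtain ⟨y, hy, hrel⟩ := forall₂_get?_left hF hj
  rcases hrel with ⟨i', op', he, hy'⟩ | ⟨i', he, hy'⟩ | ⟨i', rB, hy', he⟩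
  · injection he with h1 h2
    subst h1; subst h2; subst hy'
    exact hy
  · cases he
  · cases he

lemma corr_res_fwd (hF : List.Forall₂ evRel α α') {j : ℕ} {i : Fin n} {r : Bool ⊕ ℕ}
    (hj : α[j]? = some (Event.res i r)) :
    ∃ rB, α'[j]? = some (Event.res i rB) ∧ r = trr i rB := by
  obtain ⟨y, hy, hrel⟩ := forall₂_get?_left hF hj
  rcases hrel with ⟨i', op', he, hy'⟩ | ⟨i', he, hy'⟩ | ⟨i', rB, hy', he⟩
  · cases he
  · cases he
  · injection he with h1 h2
    subst h1; subst hy'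
    exact ⟨rB, hy, h2⟩

lemma corr_step_fwd (hF : List.Forall₂ evRel α α') {j : ℕ} {i : Fin n}
    (hj : α[j]? = some (Event.step i)) :
    α'[j]? = some (Event.step i) := by
  obtain ⟨y, hy, hrel⟩ := forall₂_get?_left hF hj
  rcases hrel with ⟨i', op', he, hy'⟩ | ⟨i', he, hy'⟩ | ⟨i', rB, hy', he⟩
  · cases he
  · injection he with h1
    subst h1; subst hy'
    exact hy
  · cases he

lemma corr_inv_bwd (hF : List.Forall₂ evRel α α') {j : ℕ} {i : Fin n} {q : Option ℕ}
    (hj : α'[j]? = some (Event.inv i q)) :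
    ∃ op, α[j]? = some (Event.inv i op) ∧ q = opT i op := by
  obtain ⟨x, hx, hrel⟩ := forall₂_get?_right hF hj
  rcases hrel with ⟨i', op', hx', he⟩ | ⟨i', hx', he⟩ | ⟨i', rB, he, hx'⟩
  · subst hx'
    injection he with h1 h2
    subst h1
    exact ⟨op', hx, h2⟩
  · subst hx'
    cases he
  · cases he

lemma corr_res_bwd (hF : List.Forall₂ evRel α α') {j : ℕ} {i : Fin n} {rB : Option ℕ}
    (hj : α'[j]? = some (Event.res i rB)) :
    α[j]? = some (Event.res i (trr i rB)) := by
  obtain ⟨x, hx, hrel⟩ := forall₂_get?_right hF hj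
  rcases hrel with ⟨i', op', hx', he⟩ | ⟨i', hx', he⟩ | ⟨i', rB', he, hx'⟩
  · subst hx'
    cases he
  · subst hx'
    cases he
  · injection he with h1 h2
    subst h1; subst h2; subst hx'
    exact hx

/-! ### Correspondence of matches and precedence -/

lemma matches_fwd (hF : List.Forall₂ evRel α α') {j k : ℕ} {r : Bool ⊕ ℕ}
    (hm : Matches α j k r) :
    ∃ i op rB, α[j]? = some (Event.inv i op) ∧ r = trr i rB ∧ Matches α' j k rB := by
  obtain ⟨i, op, hj, hk, hjk, hmid⟩ := hm
  obtain ⟨rB, hk', htr⟩ := corr_res_fwd hF hk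
  refine ⟨i, op, rB, hj, htr, i, opT i op, corr_inv_fwd hF hj, hk', hjk, ?_⟩
  intro m h1 h2 r' hm'
  exact hmid m h1 h2 (trr i r') (corr_res_bwd hF hm')

lemma matches_bwd (hF : List.Forall₂ evRel α α') {j k : ℕ} {rB : Option ℕ}
    (hm : Matches α' j k rB) :
    ∃ i op, α[j]? = some (Event.inv i op) ∧ Matches α j k (trr i rB) := by
  obtain ⟨i, q, hj, hk, hjk, hmid⟩ := hm
  obtain ⟨op, hj', -⟩ := corr_inv_bwd hF hj
  refine ⟨i, op, hj', i, op, hj', corr_res_bwd hF hk, hjk, ?_⟩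
  intro m h1 h2 r' hm'
  obtain ⟨rB', hk', htr⟩ := corr_res_fwd hF hm'
  exact hmid m h1 h2 rB' hk'

lemma precedes_iff (hF : List.Forall₂ evRel α α') {a b : ℕ} :
    Precedes α a b ↔ Precedes α' a b := by
  constructor
  · rintro ⟨k, r, hm, hk⟩
    obtain ⟨i, op, rB, -, -, hm'⟩ := matches_fwd hF hm
    exact ⟨k, _, hm', hk⟩
  · rintro ⟨k, r, hm, hk⟩
    obtain ⟨i, op, -, hm'⟩ := matches_bwd hF hm
    exact ⟨k, _, hm', hk⟩

/-! ### Translating sequential queue runs to contest runs -/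

/-- Translate an element of a sequential queue run to a contest run element. -/
def trEl (e : Fin n × (QueueSpec n).Op × (QueueSpec n).Res) :
    Fin n × (ContestSpec n).Op × (ContestSpec n).Res :=
  (e.1, (if e.1.val = 0 then ContestOp.decide else ContestOp.compete), trr e.1 e.2.2)

lemma seqrun_competes : ∀ (l : List (Fin n × (QueueSpec n).Op × (QueueSpec n).Res))
    (s : (ContestSpec n).State), (∀ e ∈ l, e.1.val ≠ 0) →
    SeqRun (ContestSpec n) s (l.map trEl) := by
  intro l
  induction l with
  | nil => intro s _; exact SeqRun.nil s
  | cons e t ih =>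
    intro s hsh
    have hne : e.1.val ≠ 0 := hsh e (List.mem_cons_self)
    refine SeqRun.cons (s' := ((match s.1 with | some j => some j | none => some e.1), s.2))
      ?_ (ih _ (fun x hx => hsh x (List.mem_cons_of_mem _ hx)))
    left
    refine ⟨?_, hne, ?_, rfl, rfl⟩
    · show (if e.1.val = 0 then ContestOp.decide else ContestOp.compete) = ContestOp.compete
      rw [if_neg hne]
    · show trr e.1 e.2.2 = Sum.inl true
      unfold trr
      rw [if_neg hne]

lemma seqrun_translate : ∀ (l : List (Fin n × (QueueSpec n).Op × (QueueSpec n).Res))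
    (s : List ℕ) (c : Option (Fin n)),
    SeqRun (QueueSpec n) s l →
    (∀ e ∈ l, (e.1.val = 0 ∧ e.2.1 = none) ∨ (e.1.val ≠ 0 ∧ e.2.1 = some e.1.val)) →
    l.countP (fun e => e.1.val == 0) ≤ 1 →
    ((s = [] ∧ c = none) ∨ (∃ j : Fin n, c = some j ∧ j.val ≠ 0 ∧ ∃ t, s = j.val :: t)) →
    SeqRun (ContestSpec n) (c, false) (l.map trEl) := by
  intro l
  induction l with
  | nil => intro s c _ _ _ _; exact SeqRun.nil _
  | cons e t ih =>
    intro s c hrun hsh hcnt hrel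
    obtain ⟨i, op, r⟩ := e
    have hshe := hsh _ (List.mem_cons_self)
    have hsht : ∀ e ∈ t, (e.1.val = 0 ∧ e.2.1 = none) ∨ (e.1.val ≠ 0 ∧ e.2.1 = some e.1.val) :=
      fun x hx => hsh x (List.mem_cons_of_mem _ hx)
    obtain ⟨s0, hs0⟩ : ∃ s0 : (QueueSpec n).State, s0 = s := ⟨s, rfl⟩
    subst hs0
    cases hrun with
    | cons hδ hrun' =>
      rcases hshe with ⟨hz, hop⟩ | ⟨hz, hop⟩
      · -- the dequeue by the referee
        simp only at hz hop
        subst hop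
        have hcnt0 : t.countP (fun e => e.1.val == 0) = 0 := by
          rw [List.countP_cons] at hcnt
          have hb : (((i, (none : (QueueSpec n).Op), r)).1.val == 0) = true := by
            simp [hz]
          rw [hb, if_pos rfl] at hcnt
          omega
        have hcompt : ∀ e ∈ t, e.1.val ≠ 0 := by
          intro x hx hx0
          have := List.countP_eq_zero.mp hcnt0 x hx
          simp [hx0] at this
        rcases hδ with ⟨v, hv, -, -⟩ | ⟨-, hcase⟩
        · cases hv
        rcases hcase with ⟨hs, hs', hr⟩ | ⟨v, tl, hs, hs', hr⟩
        · -- empty queue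
          rcases hrel with ⟨-, hcn⟩ | ⟨j, hc, hjz, tl', hs2⟩
          · subst hcn; subst hr
            refine SeqRun.cons (s' := ((none : Option (Fin n)), true)) ?_ ?_
            · right
              refine ⟨?_, hz, rfl, rfl, ?_⟩
              · show (if i.val = 0 then ContestOp.decide else ContestOp.compete) = ContestOp.decide
                rw [if_pos hz]
              · show trr i none = _
                unfold trr
                rw [if_pos hz]
            · exact seqrun_competes t _ hcompt
          · rw [hs] at hs2; cases hs2
        · -- nonempty queue
          rcases hrel with ⟨hsn, -⟩ | ⟨j, hc, hjz, tl', hs2⟩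
          · rw [hs] at hsn; cases hsn
          · have hv : v = j.val := by
              rw [hs] at hs2
              exact (List.cons.injEq ..).mp hs2 |>.1
            subst hr; subst hv; subst hc
            refine SeqRun.cons (s' := (some j, true)) ?_ ?_
            · right
              refine ⟨?_, hz, rfl, rfl, ?_⟩
              · show (if i.val = 0 then ContestOp.decide else ContestOp.compete) = ContestOp.decide
                rw [if_pos hz]
              · show trr i (some j.val) = _
                unfold trr
                rw [if_pos hz]
            · exact seqrun_competes t _ hcompt
      · -- an enqueue by a competitor
        simp only at hz hop
        subst hop
        rcases hδ with ⟨v, hv, hs', hr⟩ | ⟨hvn, -⟩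
        swap
        · cases hvn
        have hvi : v = i.val := (Option.some.inj hv).symm
        subst hvi; subst hr; subst hs'
        have hcnt' : t.countP (fun e => e.1.val == 0) ≤ 1 := by
          rw [List.countP_cons] at hcnt
          omega
        rcases hrel with ⟨hsn, hcn⟩ | ⟨j, hc, hjz, tl', hs2⟩
        · subst hsn; subst hcn
          refine SeqRun.cons (s' := (some i, false)) ?_
            (ih _ _ hrun' hsht hcnt' (Or.inr ⟨i, rfl, hz, [], rfl⟩))
          left
          refine ⟨?_, hz, ?_, rfl, rfl⟩
          · show (if i.val = 0 then ContestOp.decide else ContestOp.compete) = ContestOp.compete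
            rw [if_neg hz]
          · show trr i none = Sum.inl true
            unfold trr
            rw [if_neg hz]
        · subst hc
          refine SeqRun.cons (s' := (some j, false)) ?_
            (ih _ _ hrun' hsht hcnt' (Or.inr ⟨j, rfl, hjz, tl' ++ [i.val], by rw [hs2]; rfl⟩))
          left
          refine ⟨?_, hz, ?_, rfl, rfl⟩
          · show (if i.val = 0 then ContestOp.decide else ContestOp.compete) = ContestOp.compete
            rw [if_neg hz]
          · show trr i none = Sum.inl true
            unfold trr
            rw [if_neg hz]
  
/-! ### Facts about executions of contest implementations -/

lemma inv_allowed (A' : Impl n (ContestSpec n) ι M) (α : List (Event n (ContestSpec n)))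
    (h : IsExec A' α) {j : ℕ} {i : Fin n} {op : (ContestSpec n).Op}
    (hj : α[j]? = some (Event.inv i op)) :
    (op = ContestOp.compete → i.val ≠ 0) ∧ (op = ContestOp.decide → i.val = 0) := by
  have hts : α.take (j+1) = α.take j ++ [Event.inv i op] := by
    rw [List.take_succ, hj]
    rfl
  have hpre : IsExec A' (α.take j ++ [Event.inv i op]) := by
    rw [← hts]
    exact isExec_prefix A' _ (α.drop (j+1)) (by rw [List.take_append_drop]; exact h)
  unfold IsExec at hpre
  rw [execConfig_append] at hpre
  cases hc : execConfig A' (α.take j) with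
  | none => rw [hc] at hpre; simp at hpre
  | some C0 =>
    rw [hc] at hpre
    replace hpre : (nextConfig A' C0 (Event.inv i op)).isSome = true := by
      have h' : (List.foldlM (fun C e => nextConfig A' C e) C0
          [Event.inv i op]).isSome = true := hpre
      simpa using h'
    simp only [nextConfig] at hpre
    cases hp : C0.pend i with
    | some _ => rw [hp] at hpre; simp at hpre
    | none =>
      rw [hp] at hpre
      split_ifs at hpre with hall
      · obtain ⟨-, h1, h2⟩ := allowed_props (n := n) hall
        exact ⟨h1, h2⟩
      · simp at hpre

lemma countP_pres_le_one (A' : Impl n (ContestSpec n) ι M)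
    (α : List (Event n (ContestSpec n))) (h : IsExec A' α) (i : Fin n) :
    α.countP (pres i) ≤ 1 ∧ α.countP (pinv i) ≤ 1 := by
  unfold IsExec at h
  cases hc : execConfig A' α with
  | none => rw [hc] at h; simp at h
  | some C =>
    obtain ⟨h1, h2, h3⟩ := countInv A' α C hc i
    cases hp : (C.pend i).isSome <;> rw [hp] at h2 <;> simp at h2 <;> omega

lemma res_unique (A' : Impl n (ContestSpec n) ι M) (α : List (Event n (ContestSpec n)))
    (h : IsExec A' α) (i : Fin n) {j k : ℕ} {r r' : (ContestSpec n).Res}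
    (hj : α[j]? = some (Event.res i r)) (hk : α[k]? = some (Event.res i r')) : j = k := by
  by_contra hne
  have h2 : 2 ≤ α.countP (pres i) := by
    rcases Nat.lt_or_ge j k with hlt | hge
    · exact two_le_countP α (pres i) j k hlt _ _ hj hk (by simp [pres]) (by simp [pres])
    · have hlt : k < j := by omega
      exact two_le_countP α (pres i) k j hlt _ _ hk hj (by simp [pres]) (by simp [pres])
  have := (countP_pres_le_one A' α h i).1
  omega

lemma contest_inv_unique (A' : Impl n (ContestSpec n) ι M) (α : List (Event n (ContestSpec n)))
    (h : IsExec A' α) (i : Fin n) {j k : ℕ} {op op' : (ContestSpec n).Op}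
    (hj : α[j]? = some (Event.inv i op)) (hk : α[k]? = some (Event.inv i op')) : j = k := by
  by_contra hne
  have h2 : 2 ≤ α.countP (pinv i) := by
    rcases Nat.lt_or_ge j k with hlt | hge
    · exact two_le_countP α (pinv i) j k hlt _ _ hj hk (by simp [pinv]) (by simp [pinv])
    · have hlt : k < j := by omega
      exact two_le_countP α (pinv i) k j hlt _ _ hk hj (by simp [pinv]) (by simp [pinv])
  have := (countP_pres_le_one A' α h i).2
  omega

lemma forall₂_mem_right {γ δ : Type*} {R : γ → δ → Prop} {l1 : List γ} {l2 : List δ}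
    (h : List.Forall₂ R l1 l2) {y : δ} (hy : y ∈ l2) : ∃ x ∈ l1, R x y := by
  obtain ⟨k, hk, he⟩ := List.mem_iff_getElem.mp hy
  obtain ⟨x, hx, hr⟩ := forall₂_get?_right h (List.getElem?_eq_some_iff.mpr ⟨hk, he⟩)
  exact ⟨x, mem_of_getElem?' hx, hr⟩

/-- Shorthand for the execution translation. -/
noncomputable def phiE (α : List (Event n (ContestSpec n))) : List (Event n (QueueSpec n)) :=
  goPhi B (initConfig (mkA B)) α

lemma psi_init : ψc B (initConfig (mkA B)) = initConfig B := rfl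

lemma isExec_phi (α : List (Event n (ContestSpec n))) (h : IsExec (mkA B) α) :
    IsExec B (phiE B α) ∧ List.Forall₂ evRel α (phiE B α) := by
  unfold IsExec at h
  cases hc : execConfig (mkA B) α with
  | none => rw [hc] at h; simp at h
  | some D =>
    obtain ⟨h1, h2⟩ := sim B α (initConfig (mkA B)) D hc
    refine ⟨?_, h2⟩
    unfold IsExec execConfig phiE
    have hinit : initConfig B = ψc B (initConfig (mkA B)) := rfl
    rw [hinit, h1]
    rfl

lemma phiE_append (α β : List (Event n (ContestSpec n))) {D : Config (mkA B)}
    (h : execConfig (mkA B) α = some D) :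
    phiE B (α ++ β) = phiE B α ++ goPhi B D β :=
  goPhi_append B _ D α β h

lemma prefE_get {S : Spec n} (E : ℕ → Event n S) {m k : ℕ} (h : m < k) :
    (prefE E k)[m]? = some (E m) := by
  unfold prefE
  rw [List.getElem?_map, List.getElem?_range h]
  rfl

lemma prefE_succ {S : Spec n} (E : ℕ → Event n S) (m : ℕ) :
    prefE E (m+1) = prefE E m ++ [E m] := by
  unfold prefE
  rw [List.range_succ, List.map_append]
  rfl

lemma prefE_length {S : Spec n} (E : ℕ → Event n S) (m : ℕ) : (prefE E m).length = m := by
  simp [prefE]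

/-- There are no infinite executions of the contest implementation at all: lock-freedom
of the queue, together with the fact that at most `n` one-shot operations are ever
invoked, bounds the number of events. -/
lemma no_infinite (hLF : LockFree B) (E : ℕ → Event n (ContestSpec n))
    (hvalid : ∀ m, IsExec (mkA B) (prefE E m)) : False := by
  classical
  let E' : ℕ → Event n (QueueSpec n) :=
    fun m => (phiE B (prefE E (m+1)))[m]?.getD (Event.step (E m).proc)
  have hpref : ∀ m, prefE E' m = phiE B (prefE E m) := by
    intro m
    induction m with
    | zero => rfl
    | succ m ih =>
      have hD : ∃ D, execConfig (mkA B) (prefE E m) = some D := by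
        have hv := hvalid m
        unfold IsExec at hv
        cases hc : execConfig (mkA B) (prefE E m) with
        | none => rw [hc] at hv; simp at hv
        | some D => exact ⟨D, rfl⟩
      obtain ⟨D, hD⟩ := hD
      have hsucc : phiE B (prefE E (m+1)) = phiE B (prefE E m) ++ goPhi B D [E m] := by
        rw [prefE_succ, phiE_append B _ _ hD]
      have hlen : (phiE B (prefE E m)).length = m := by
        unfold phiE
        rw [goPhi_length, prefE_length]
      obtain ⟨x, hx⟩ : ∃ x, goPhi B D [E m] = [x] := ⟨_, rfl⟩
      have hE' : E' m = x := by
        show (phiE B (prefE E (m+1)))[m]?.getD _ = x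
        rw [hsucc, hx, List.getElem?_append_right (le_of_eq hlen), hlen]
        simp
      rw [prefE_succ E' m, ih, hE', hsucc, hx]
  have hvalid' : ∀ m, IsExec B (prefE E' m) := by
    intro m
    rw [hpref]
    exact (isExec_phi B _ (hvalid m)).1
  set P : Set ℕ := {m | ∃ i r, E m = Event.res i r} with hP
  have hPsub : ∀ i : Fin n, Set.Subsingleton {m | ∃ r, E m = Event.res i r} := by
    intro i m1 hm1 m2 hm2
    obtain ⟨r1, h1⟩ := hm1
    obtain ⟨r2, h2⟩ := hm2
    have hK1 : m1 < max m1 m2 + 1 := by omega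
    have hK2 : m2 < max m1 m2 + 1 := by omega
    exact res_unique (mkA B) (prefE E (max m1 m2 + 1)) (hvalid _) i
      (by rw [prefE_get E hK1, h1]) (by rw [prefE_get E hK2, h2])
  have hPfin : P.Finite := by
    have hsub : P ⊆ ⋃ i : Fin n, {m | ∃ r, E m = Event.res i r} := by
      intro m hm
      obtain ⟨i, r, h⟩ := hm
      exact Set.mem_iUnion.mpr ⟨i, r, h⟩
    exact Set.Finite.subset (Set.finite_iUnion (fun i => (hPsub i).finite)) hsub
  obtain ⟨b, hb⟩ := hPfin.bddAbove
  obtain ⟨m', hm', i, r, hr⟩ := hLF E' hvalid' (b+1)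
  have hget : (prefE E' (m'+1))[m']? = some (Event.res i r) := by
    rw [prefE_get E' (by omega), hr]
  rw [hpref (m'+1)] at hget
  have hF := (isExec_phi B _ (hvalid (m'+1))).2
  have hbk := corr_res_bwd hF hget
  rw [prefE_get E (by omega)] at hbk
  have hmem : m' ∈ P := ⟨i, trr i r, Option.some.inj hbk⟩
  have := hb hmem
  omega

lemma waitFree_mkA (hLF : LockFree B) : WaitFree (mkA B) := by
  intro E hvalid i _ m
  exact (no_infinite B hLF E hvalid).elim

/-! ### The linearization function for the contest implementation -/

/-- Translate a linearization element back to the contest object, using the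
invocation event of `α` at its position to determine the translation. -/
def trResF (α : List (Event n (ContestSpec n))) (p : ℕ × (QueueSpec n).Res) :
    ℕ × (ContestSpec n).Res :=
  (p.1, match α[p.1]? with
        | some (Event.inv i _) => trr i p.2
        | _ => Sum.inl true)

/-- The linearization function for `mkA B` obtained from one for `B`. -/
noncomputable def LA (LB : List (Event n (QueueSpec n)) → List (ℕ × (QueueSpec n).Res))
    (α : List (Event n (ContestSpec n))) : List (ℕ × (ContestSpec n).Res) :=
  (LB (phiE B α)).map (trResF α)

lemma linfun_mkA (LB : List (Event n (QueueSpec n)) → List (ℕ × (QueueSpec n).Res))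
    (hLB : IsLinFun B LB) : IsLinFun (mkA B) (LA B LB) := by
  intro α hα
  obtain ⟨hφ, hF⟩ := isExec_phi B α hα
  have H := hLB (phiE B α) hφ
  constructor
  · -- inv_mem
    intro p hp
    obtain ⟨q, hq, rfl⟩ := List.mem_map.mp hp
    obtain ⟨i, op', hq'⟩ := H.inv_mem q hq
    obtain ⟨op, hop, -⟩ := corr_inv_bwd hF hq'
    exact ⟨i, op, hop⟩
  · -- nodup
    show (((LB (phiE B α)).map (trResF α)).map Prod.fst).Nodup
    rw [List.map_map]
    exact H.nodup
  · -- complete_mem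
    intro j k r hm
    obtain ⟨i, op, rB, hj, htr, hm'⟩ := matches_fwd hF hm
    have hmem := H.complete_mem j k rB hm'
    refine List.mem_map.mpr ⟨(j, rB), hmem, ?_⟩
    show (j, match α[j]? with
        | some (Event.inv i' _) => trr i' rB
        | _ => Sum.inl true) = (j, r)
    rw [hj, htr]
  · -- complete_out
    intro j k r r' hm hmem
    obtain ⟨i, op, rB, hj, htr, hm'⟩ := matches_fwd hF hm
    obtain ⟨⟨j', rB'⟩, hqmem, heq⟩ := List.mem_map.mp hmem
    have hj' : j' = j := congrArg Prod.fst heq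
    rw [hj'] at hqmem heq
    have hrB : rB' = rB := H.complete_out j k rB rB' hm' hqmem
    rw [hrB] at heq
    have h2 := congrArg Prod.snd heq
    simp only [trResF, hj] at h2
    rw [htr]
    exact h2.symm
  · -- realtime
    show (((LB (phiE B α)).map (trResF α)).Pairwise fun a b => ¬Precedes α b.1 a.1)
    rw [List.pairwise_map]
    refine H.realtime.imp ?_
    intro a b hab hprec
    exact hab ((precedes_iff hF).mp hprec)
  · -- valid
    obtain ⟨lB, hf, hrun⟩ := H.valid
    refine ⟨lB.map (trEl (n := n)), ?_, ?_⟩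
    · show List.Forall₂ _ ((LB (phiE B α)).map (trResF α)) (lB.map (trEl (n := n)))
      rw [List.forall₂_map_left_iff, List.forall₂_map_right_iff]
      refine hf.imp ?_
      intro p e hpe
      obtain ⟨op, hop, hq⟩ := corr_inv_bwd hF hpe.1
      obtain ⟨hcomp, hdec⟩ := inv_allowed (mkA B) α hα hop
      constructor
      · show α[p.1]? = some (Event.inv e.1
          (if e.1.val = 0 then ContestOp.decide else ContestOp.compete))
        cases op with
        | compete => rw [show (if e.1.val = 0 then ContestOp.decide else ContestOp.compete : (ContestSpec n).Op) = ContestOp.compete from if_neg (hcomp rfl)]; exact hop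
        | decide => rw [show (if e.1.val = 0 then ContestOp.decide else ContestOp.compete : (ContestSpec n).Op) = ContestOp.decide from if_pos (hdec rfl)]; exact hop
      · show (match α[p.1]? with
            | some (Event.inv i _) => trr i p.2
            | _ => Sum.inl true) = trr e.1 e.2.2
        rw [hop, hpe.2]
    · have hshape : ∀ e ∈ lB,
          (e.1.val = 0 ∧ e.2.1 = none) ∨ (e.1.val ≠ 0 ∧ e.2.1 = some e.1.val) := by
        intro e he
        obtain ⟨p, hp, hpe⟩ := forall₂_mem_right hf he
        obtain ⟨op, hop, hq⟩ := corr_inv_bwd hF hpe.1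
        obtain ⟨hcomp, hdec⟩ := inv_allowed (mkA B) α hα hop
        cases op with
        | compete => exact Or.inr ⟨hcomp rfl, by rw [hq]; rfl⟩
        | decide => exact Or.inl ⟨hdec rfl, by rw [hq]; rfl⟩
      have hcnt : lB.countP (fun e => e.1.val == 0) ≤ 1 := by
        apply countP_le_one_of_unique
        intro j k x y hjx hky hpx hpy
        obtain ⟨px, hpx', hrelx⟩ := forall₂_get?_right hf hjx
        obtain ⟨py, hpy', hrely⟩ := forall₂_get?_right hf hky
        obtain ⟨opx, hopx, -⟩ := corr_inv_bwd hF hrelx.1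
        obtain ⟨opy, hopy, -⟩ := corr_inv_bwd hF hrely.1
        have hx0 : x.1.val = 0 := by simpa using hpx
        have hy0 : y.1.val = 0 := by simpa using hpy
        have hxy : x.1 = y.1 := Fin.val_injective (hx0.trans hy0.symm)
        rw [hxy] at hopx
        have hpos : px.1 = py.1 := contest_inv_unique (mkA B) α hα y.1 hopx hopy
        have hj1 : ((LB (phiE B α)).map Prod.fst)[j]? = some px.1 := by
          rw [List.getElem?_map, hpx']
          rfl
        have hk1 : ((LB (phiE B α)).map Prod.fst)[k]? = some py.1 := by
          rw [List.getElem?_map, hpy']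
          rfl
        have hjlt : j < ((LB (phiE B α)).map Prod.fst).length :=
          (List.getElem?_eq_some_iff.mp hj1).1
        apply (List.getElem?_inj hjlt H.nodup).mp
        rw [hj1, hk1, hpos]
      exact seqrun_translate lB [] none hrun hshape hcnt (Or.inl ⟨rfl, rfl⟩)

lemma prefclosed_mkA (LB : List (Event n (QueueSpec n)) → List (ℕ × (QueueSpec n).Res))
    (hLB : IsLinFun B LB) (hpc : PrefixClosedLin B LB) :
    PrefixClosedLin (mkA B) (LA B LB) := by
  intro α β h
  have hα : IsExec (mkA B) α := isExec_prefix _ α β h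
  obtain ⟨D, hD⟩ : ∃ D, execConfig (mkA B) α = some D := by
    unfold IsExec at hα
    cases hc : execConfig (mkA B) α with
    | none => rw [hc] at hα; simp at hα
    | some D => exact ⟨D, rfl⟩
  have happ : phiE B (α ++ β) = phiE B α ++ goPhi B D β := phiE_append B α β hD
  have hφfull : IsExec B (phiE B (α ++ β)) := (isExec_phi B _ h).1
  have hpcB := hpc (phiE B α) (goPhi B D β) (by rw [← happ]; exact hφfull)
  obtain ⟨tl, htl⟩ := hpcB
  show (LB (phiE B α)).map (trResF α) <+: (LB (phiE B (α ++ β))).map (trResF (α ++ β))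
  rw [happ, ← htl, List.map_append]
  have hagree : (LB (phiE B α)).map (trResF α) = (LB (phiE B α)).map (trResF (α ++ β)) := by
    apply List.map_congr_left
    intro p hp
    have H := hLB (phiE B α) (isExec_phi B α hα).1
    obtain ⟨i, op', hq'⟩ := H.inv_mem p hp
    obtain ⟨op, hop, -⟩ := corr_inv_bwd (isExec_phi B α hα).2 hq'
    have hlt : p.1 < α.length := (List.getElem?_eq_some_iff.mp hop).1
    unfold trResF
    rw [List.getElem?_append, if_pos hlt]
  rw [hagree]
  exact List.prefix_append _ _

end ContestFromQueue

/-- A single instance of any lock-free strongly linearizable queue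
implementation can be used to obtain a wait-free strongly linearizable implementation
of the one-shot contest object, for `n ≥ 2` processes: whenever there is a lock-free
strongly linearizable queue implementation from the base objects `M`, there is a
wait-free strongly linearizable implementation of the one-shot contest object from
the same base objects. -/
theorem contest_from_lockfree_strongly_linearizable_queue :
    ∀ (n : ℕ), 2 ≤ n →
    ∀ (ι : Type) (M : ι → BaseObject) (B : Impl n (QueueSpec n) ι M),
      LockFree B → StronglyLinearizable B →
      ∃ A : Impl n (ContestSpec n) ι M, WaitFree A ∧ StronglyLinearizable A := by
  intro n hn ι M B hLF hSL
  obtain ⟨LB, hLB, hpc⟩ := hSL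
  exact ⟨mkA B, waitFree_mkA B hLF,
    LA B LB, linfun_mkA B LB hLB, prefclosed_mkA B LB hLB hpc⟩
end

section
/- For n ≥ 2 processes, given a single wait-free strongly linearizable implementation of any one of the following objects — a counter, a snapshot, a max register, a fetch&increment object, or a fetch&add object — one can obtain a wait-free strongly linearizable implementation of the long-lived contest object. -/
set_option autoImplicit false

/-! ## Auxiliary development -/

section Framework

open Classical

namespace LLCProof

variable {n : ℕ} {ι : Type} {M : ι → BaseObject}

/-- Total step function (junk on invalid steps). -/
noncomputable def nc {S : Spec n} (A : Impl n S ι M) (C : Config A) (e : Event n S) :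
    Config A :=
  (nextConfig A C e).getD C

/-- Configuration after the first `p` events (assuming validity). -/
noncomputable def cfgAt {S : Spec n} (A : Impl n S ι M) (α : List (Event n S)) (p : ℕ) :
    Config A :=
  (α.take p).foldl (nc A) (initConfig A)

variable {S : Spec n} {A : Impl n S ι M}

lemma execConfig_append (α β : List (Event n S)) :
    execConfig A (α ++ β) =
      (execConfig A α).bind (fun C => β.foldlM (fun C e => nextConfig A C e) C) := by
  simp only [execConfig, List.foldlM_append]
  rfl

lemma isExec_prefix {α β : List (Event n S)} (h : IsExec A (α ++ β)) : IsExec A α := by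
  unfold IsExec at h ⊢
  rw [execConfig_append] at h
  cases hα : execConfig A α with
  | none => rw [hα] at h; simp at h
  | some C => simp

lemma isExec_take {α : List (Event n S)} (h : IsExec A α) (p : ℕ) :
    IsExec A (α.take p) := by
  have := List.take_append_drop p α
  rw [← this] at h
  exact isExec_prefix h

lemma foldl_of_foldlM {l : List (Event n S)} : ∀ {C C' : Config A},
    l.foldlM (fun C e => nextConfig A C e) C = some C' → l.foldl (nc A) C = C' := by
  induction l with
  | nil => intro C C' h; simp [List.foldlM] at h; simp [h]
  | cons e t ih =>
    intro C C' h
    simp only [List.foldlM_cons] at h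
    cases he : nextConfig A C e with
    | none => rw [he] at h; simp at h
    | some C1 =>
      rw [he] at h
      have hnc : nc A C e = C1 := by simp [nc, he]
      rw [List.foldl_cons, hnc]
      exact ih (by simpa using h)

lemma cfgAt_spec {α : List (Event n S)} {p : ℕ} {C : Config A}
    (h : execConfig A (α.take p) = some C) : cfgAt A α p = C :=
  foldl_of_foldlM h

lemma execConfig_take {α : List (Event n S)} (h : IsExec A α) (p : ℕ) :
    execConfig A (α.take p) = some (cfgAt A α p) := by
  have h1 := isExec_take h p
  unfold IsExec at h1
  cases hc : execConfig A (α.take p) with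
  | none => rw [hc] at h1; simp at h1
  | some C => rw [cfgAt_spec hc]

lemma step_at {α : List (Event n S)} (h : IsExec A α) {p : ℕ} {e : Event n S}
    (hp : α[p]? = some e) :
    nextConfig A (cfgAt A α p) e = some (cfgAt A α (p + 1)) := by
  have hlen : p < α.length := by
    by_contra hc
    rw [List.getElem?_eq_none (le_of_not_gt hc)] at hp
    cases hp
  have h1 := execConfig_take h p
  have h2 := execConfig_take h (p + 1)
  rw [List.take_succ, hp] at h2
  rw [execConfig_append, h1] at h2
  have h2' : ((nextConfig A (cfgAt A α p) e).bind fun C1 => some C1)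
      = some (cfgAt A α (p + 1)) := h2
  simpa using h2'

/-! ### Inversion lemmas for `nextConfig` -/

lemma inv_inversion {C C' : Config A} {i : Fin n} {op : S.Op}
    (h : nextConfig A C (.inv i op) = some C') :
    C.pend i = none ∧ S.allowed i (C.hist i) op = true ∧
    C'.mem = C.mem ∧ C'.loc = Function.update C.loc i (A.invokeL i op (C.loc i)) ∧
    C'.pend = Function.update C.pend i (some op) ∧
    C'.hist = Function.update C.hist i (C.hist i ++ [op]) := by
  simp only [nextConfig] at h
  cases hp : C.pend i with
  | some op' => rw [hp] at h; cases h
  | none =>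
    rw [hp] at h
    by_cases ha : S.allowed i (C.hist i) op = true
    · rw [if_pos ha] at h
      cases h
      exact ⟨rfl, ha, rfl, rfl, rfl, rfl⟩
    · rw [if_neg ha] at h; cases h

lemma step_inversion {C C' : Config A} {i : Fin n}
    (h : nextConfig A C (.step i) = some C') :
    (∃ op, C.pend i = some op) ∧ A.ret i (C.loc i) = none ∧
    C'.mem = updMem C.mem (A.obj i (C.loc i))
      ((M (A.obj i (C.loc i))).apply (A.prim i (C.loc i)) (C.mem (A.obj i (C.loc i)))).1 ∧
    C'.loc = Function.update C.loc i
      (A.updL i (C.loc i)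
        ((M (A.obj i (C.loc i))).apply (A.prim i (C.loc i))
          (C.mem (A.obj i (C.loc i)))).2) ∧
    C'.pend = C.pend ∧ C'.hist = C.hist := by
  simp only [nextConfig] at h
  cases hp : C.pend i with
  | none => rw [hp] at h; cases h
  | some op =>
    rw [hp] at h
    by_cases hr : A.ret i (C.loc i) = none
    · rw [if_pos hr] at h
      cases h
      exact ⟨⟨op, rfl⟩, hr, rfl, rfl, rfl, rfl⟩
    · rw [if_neg hr] at h; cases h

lemma res_inversion {C C' : Config A} {i : Fin n} {r : S.Res}
    (h : nextConfig A C (.res i r) = some C') :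
    (∃ op, C.pend i = some op) ∧ A.ret i (C.loc i) = some r ∧
    C'.mem = C.mem ∧ C'.loc = C.loc ∧
    C'.pend = Function.update C.pend i none ∧ C'.hist = C.hist := by
  simp only [nextConfig] at h
  cases hp : C.pend i with
  | none => rw [hp] at h; cases h
  | some op =>
    rw [hp] at h
    by_cases hr : A.ret i (C.loc i) = some r
    · rw [if_pos hr] at h
      cases h
      exact ⟨⟨op, rfl⟩, hr, rfl, rfl, rfl, rfl⟩
    · rw [if_neg hr] at h; cases h

/-! ### History and pending invariants -/

/-- The operations invoked by process `i` in a list of events. -/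
def invOps (i : Fin n) (l : List (Event n S)) : List S.Op :=
  l.filterMap (fun e => match e with
    | .inv i' op => if i' = i then some op else none
    | _ => none)

lemma hist_spec {α : List (Event n S)} (h : IsExec A α) :
    ∀ p, p ≤ α.length → ∀ i, (cfgAt A α p).hist i = invOps i (α.take p) := by
  intro p
  induction p with
  | zero => intro _ i; simp [cfgAt, invOps, initConfig]
  | succ p ih =>
    intro hp i
    have hp' : p < α.length := hp
    have hplen : p ≤ α.length := le_of_lt hp'
    obtain ⟨e, he⟩ : ∃ e, α[p]? = some e := ⟨α[p], List.getElem?_eq_getElem hp'⟩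
    have hstep := step_at h he
    have htake : α.take (p+1) = α.take p ++ [e] := by
      rw [List.take_succ, he]; rfl
    have hinvops : invOps i (α.take (p+1)) = invOps i (α.take p) ++ invOps i [e] := by
      rw [htake, invOps, List.filterMap_append]; rfl
    cases e with
    | inv i' op =>
      obtain ⟨_, _, _, _, _, hh⟩ := inv_inversion hstep
      rw [hh, hinvops]
      by_cases hii : i' = i
      · rw [hii, Function.update_self, ih hplen i]
        simp [invOps, hii]
      · rw [Function.update_of_ne (by intro hc; exact hii hc.symm) _ _, ih hplen i]
        simp [invOps, hii]
    | step i' =>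
      obtain ⟨_, _, _, _, _, hh⟩ := step_inversion hstep
      rw [hh, hinvops, ih hplen i]
      simp [invOps]
    | res i' r =>
      obtain ⟨_, _, _, _, _, hh⟩ := res_inversion hstep
      rw [hh, hinvops, ih hplen i]
      simp [invOps]

lemma pend_stable {α : List (Event n S)} (h : IsExec A α) {i : Fin n} (p : ℕ) :
    ∀ q, p ≤ q → q ≤ α.length → ((cfgAt A α p).pend i).isSome →
    (∀ m, p ≤ m → m < q → ∀ r, α[m]? ≠ some (.res i r)) →
    ((cfgAt A α q).pend i).isSome := by
  intro q
  induction q with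
  | zero => intro hpq _ hs _; interval_cases p; exact hs
  | succ q ih =>
    intro hpq hq hs hnores
    rcases Nat.lt_or_ge p (q+1) with hlt | hge
    · have hpq' : p ≤ q := Nat.lt_succ_iff.mp hlt
      have hq' : q < α.length := hq
      have hind : ((cfgAt A α q).pend i).isSome :=
        ih hpq' (le_of_lt hq') hs (fun m hm1 hm2 => hnores m hm1 (Nat.lt_succ_of_lt hm2))
      obtain ⟨e, he⟩ : ∃ e, α[q]? = some e := ⟨α[q], List.getElem?_eq_getElem hq'⟩
      have hstep := step_at h he
      cases e with
      | inv i' op =>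
        obtain ⟨_, _, _, _, hpd, _⟩ := inv_inversion hstep
        rw [hpd]
        by_cases hii : i' = i
        · subst hii; simp
        · rw [Function.update_of_ne (by intro hc; exact hii hc.symm)]; exact hind
      | step i' =>
        obtain ⟨_, _, _, _, hpd, _⟩ := step_inversion hstep
        rw [hpd]; exact hind
      | res i' r =>
        by_cases hii : i' = i
        · subst hii
          exact absurd he (hnores q hpq' (Nat.lt_succ_self q) r)
        · obtain ⟨_, _, _, _, hpd, _⟩ := res_inversion hstep
          rw [hpd, Function.update_of_ne (by intro hc; exact hii hc.symm)]
          exact hind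
    · have : p = q + 1 := le_antisymm hpq hge
      subst this; exact hs

lemma exists_res_between {α : List (Event n S)} (h : IsExec A α) {i : Fin n}
    {p q : ℕ} {op op' : S.Op}
    (hp : α[p]? = some (.inv i op)) (hq : α[q]? = some (.inv i op')) (hpq : p < q) :
    ∃ m r, p < m ∧ m < q ∧ α[m]? = some (.res i r) := by
  by_contra hc
  push_neg at hc
  have hqlen : q < α.length := by
    by_contra hcc
    rw [List.getElem?_eq_none (le_of_not_gt hcc)] at hq
    cases hq
  have hstep_p := step_at h hp
  obtain ⟨_, _, _, _, hpd, _⟩ := inv_inversion hstep_p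
  have hsome : ((cfgAt A α (p+1)).pend i).isSome := by
    rw [hpd, Function.update_self]; rfl
  have hst := pend_stable h (p+1) q hpq (le_of_lt hqlen) hsome
    (fun m hm1 hm2 r hr => hc m r (Nat.lt_of_succ_le hm1) hm2 hr)
  have hstep_q := step_at h hq
  obtain ⟨hpnone, _⟩ := inv_inversion hstep_q
  rw [hpnone] at hst
  simp at hst

lemma same_proc_precedes {α : List (Event n S)} (h : IsExec A α) {i : Fin n}
    {j j' : ℕ} {op op' : S.Op}
    (hj : α[j]? = some (.inv i op)) (hj' : α[j']? = some (.inv i op')) (hlt : j < j') :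
    Precedes α j j' := by
  obtain ⟨m0, r0, hm0a, hm0b, hm0c⟩ := exists_res_between h hj hj' hlt
  have hex : ∃ m, j < m ∧ m < j' ∧ ∃ r, α[m]? = some (.res i r) := ⟨m0, hm0a, hm0b, r0, hm0c⟩
  classical
  let k := Nat.find hex
  obtain ⟨hk1, hk2, r, hk3⟩ := Nat.find_spec hex
  refine ⟨k, r, ⟨i, op, hj, hk3, hk1, ?_⟩, hk2⟩
  intro m hm1 hm2 r' hr'
  exact Nat.find_min hex hm2 ⟨hm1, lt_trans hm2 hk2, r', hr'⟩

/-! ### The lifted implementation -/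

/-- The high-level operation of process `i` on the contest object. -/
def cop {n : ℕ} (i : Fin n) : ContestOp :=
  if i.val = 0 then ContestOp.decide else ContestOp.compete

variable {S1 : Spec n}

/-- The contest implementation obtained from an implementation `B` of `S1`. -/
noncomputable def lift (B : Impl n S1 ι M) (opmap : Fin n → ℕ → ContestOp → S1.Op)
    (retmap : Fin n → S1.Res → Option ℕ) : Impl n (LLContestSpec n) ι M where
  Local := fun i => B.Local i × ℕ
  initL := fun i => (B.initL i, 0)
  invokeL := fun i op ℓ => (B.invokeL i (opmap i ℓ.2 op) ℓ.1, ℓ.2 + 1)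
  obj := fun i ℓ => B.obj i ℓ.1
  prim := fun i ℓ => B.prim i ℓ.1
  updL := fun i ℓ rs => (B.updL i ℓ.1 rs, ℓ.2)
  ret := fun i ℓ => (B.ret i ℓ.1).map (retmap i)

variable (B : Impl n S1 ι M) (opmap : Fin n → ℕ → ContestOp → S1.Op)
    (retmap : Fin n → S1.Res → Option ℕ) (d : S1.Res)

/-- Translation of a single event, relative to the current configuration. -/
noncomputable def trE (C : Config (lift B opmap retmap)) :
    Event n (LLContestSpec n) → Event n S1
  | .inv i op => .inv i (opmap i ((C.loc i).2) op)
  | .step i => .step i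
  | .res i _ => .res i ((B.ret i ((C.loc i).1)).getD d)

/-- Translation of a list of events. -/
noncomputable def tr (C : Config (lift B opmap retmap)) :
    List (Event n (LLContestSpec n)) → List (Event n S1)
  | [] => []
  | e :: l => trE B opmap retmap d C e :: tr (nc (lift B opmap retmap) C e) l

lemma tr_length (C : Config (lift B opmap retmap)) (l : List (Event n (LLContestSpec n))) :
    (tr B opmap retmap d C l).length = l.length := by
  induction l generalizing C with
  | nil => rfl
  | cons e t ih => simp [tr, ih]

lemma tr_getElem? (l : List (Event n (LLContestSpec n))) :
    ∀ (C : Config (lift B opmap retmap)) (p : ℕ),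
    (tr B opmap retmap d C l)[p]? =
      l[p]?.map (trE B opmap retmap d ((l.take p).foldl (nc (lift B opmap retmap)) C)) := by
  induction l with
  | nil => intro C p; simp [tr]
  | cons e t ih =>
    intro C p
    cases p with
    | zero => simp [tr]
    | succ p => simpa [tr] using ih (nc (lift B opmap retmap) C e) p

lemma tr_append (l1 l2 : List (Event n (LLContestSpec n))) :
    ∀ C, tr B opmap retmap d C (l1 ++ l2) =
      tr B opmap retmap d C l1 ++
        tr B opmap retmap d (l1.foldl (nc (lift B opmap retmap)) C) l2 := by
  induction l1 with
  | nil => intro C; rfl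
  | cons e t ih => intro C; simp only [List.cons_append, tr, List.append_eq, ih, List.foldl_cons]

/-- Simulation relation between configurations. -/
def rel (CA : Config (lift B opmap retmap)) (CB : Config B) : Prop :=
  CB.mem = CA.mem ∧ (∀ i, CB.loc i = (CA.loc i).1) ∧
    (∀ i, (CB.pend i).isSome = (CA.pend i).isSome)

lemma sim_step (hall : ∀ i h op, S1.allowed i h op = true)
    {CA CA' : Config (lift B opmap retmap)} {CB : Config B} {e : Event n (LLContestSpec n)}
    (hrel : rel B opmap retmap CA CB)
    (h : nextConfig (lift B opmap retmap) CA e = some CA') :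
    ∃ CB', nextConfig B CB (trE B opmap retmap d CA e) = some CB' ∧
      rel B opmap retmap CA' CB' := by
  obtain ⟨hmem, hloc, hpend⟩ := hrel
  obtain ⟨Bmem, Bloc, Bpend, Bhist⟩ := CB
  simp only at hmem hloc hpend
  have hloc' : Bloc = fun i => (CA.loc i).1 := funext hloc
  subst hmem
  subst hloc'
  cases e with
  | inv i op =>
    obtain ⟨hpnone, _, hm, hl, hp, _⟩ := inv_inversion h
    have hbp : Bpend i = none := by
      have h1 := hpend i
      rw [hpnone] at h1
      exact Option.not_isSome_iff_eq_none.mp (by simp [h1])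
    refine ⟨(⟨CA.mem,
        Function.update (fun i => (CA.loc i).1) i
          (B.invokeL i (opmap i ((CA.loc i).2) op) ((CA.loc i).1)),
        Function.update Bpend i (some (opmap i ((CA.loc i).2) op)),
        Function.update Bhist i (Bhist i ++ [opmap i ((CA.loc i).2) op])⟩ : Config B),
      ?_, ?_, ?_, ?_⟩
    · show nextConfig B _ (.inv i (opmap i ((CA.loc i).2) op)) = some _
      simp only [nextConfig, hbp, hall, if_true]
    · show CA.mem = CA'.mem
      rw [hm]
    · intro i'
      show Function.update (fun i => (CA.loc i).1) i _ i' = (CA'.loc i').1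
      rw [hl]
      by_cases hii : i' = i
      · subst hii
        simp only [Function.update_self]
        rfl
      · simp only [Function.update_of_ne hii]
    · intro i'
      show (Function.update Bpend i _ i').isSome = _
      rw [hp]
      by_cases hii : i' = i
      · subst hii; simp
      · simp only [Function.update_of_ne hii, hpend i']
  | step i =>
    obtain ⟨⟨op, hpsome⟩, hret, hm, hl, hp, _⟩ := step_inversion h
    have hbret : B.ret i ((CA.loc i).1) = none := by
      have h2 : (B.ret i ((CA.loc i).1)).map (retmap i) = none := hret
      exact Option.map_eq_none_iff.mp h2
    have hbp : ∃ op', Bpend i = some op' := by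
      have h1 := hpend i
      rw [hpsome] at h1
      cases hcb : Bpend i with
      | none => rw [hcb] at h1; simp at h1
      | some op' => exact ⟨op', rfl⟩
    obtain ⟨op', hbp⟩ := hbp
    refine ⟨(⟨updMem CA.mem (B.obj i ((CA.loc i).1))
          ((M (B.obj i ((CA.loc i).1))).apply (B.prim i ((CA.loc i).1))
            (CA.mem (B.obj i ((CA.loc i).1)))).1,
        Function.update (fun i => (CA.loc i).1) i
          (B.updL i ((CA.loc i).1)
            ((M (B.obj i ((CA.loc i).1))).apply (B.prim i ((CA.loc i).1))
              (CA.mem (B.obj i ((CA.loc i).1)))).2),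
        Bpend, Bhist⟩ : Config B), ?_, ?_, ?_, ?_⟩
    · show nextConfig B _ (.step i) = some _
      simp only [nextConfig, hbp, hbret, if_true]
    · show updMem CA.mem _ _ = CA'.mem
      rw [hm]
      rfl
    · intro i'
      show Function.update (fun i => (CA.loc i).1) i _ i' = (CA'.loc i').1
      rw [hl]
      by_cases hii : i' = i
      · subst hii
        simp only [Function.update_self]
        rfl
      · simp only [Function.update_of_ne hii]
    · intro i'
      show (Bpend i').isSome = _
      rw [hp]
      exact hpend i'
  | res i r =>
    obtain ⟨⟨op, hpsome⟩, hret, hm, hl, hp, _⟩ := res_inversion h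
    obtain ⟨r1, hr1, hr1map⟩ : ∃ r1, B.ret i ((CA.loc i).1) = some r1 ∧ retmap i r1 = r :=
      Option.map_eq_some_iff.mp hret
    have hbp : ∃ op', Bpend i = some op' := by
      have h1 := hpend i
      rw [hpsome] at h1
      cases hcb : Bpend i with
      | none => rw [hcb] at h1; simp at h1
      | some op' => exact ⟨op', rfl⟩
    obtain ⟨op', hbp⟩ := hbp
    refine ⟨(⟨CA.mem, fun i => (CA.loc i).1,
        Function.update Bpend i none, Bhist⟩ : Config B), ?_, ?_, ?_, ?_⟩
    · show nextConfig B _ (.res i ((B.ret i ((CA.loc i).1)).getD d)) = some _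
      rw [hr1]
      simp only [nextConfig, hbp, Option.getD_some]
      rw [if_pos hr1]
    · show CA.mem = CA'.mem
      rw [hm]
    · intro i'
      show (CA.loc i').1 = (CA'.loc i').1
      rw [hl]
    · intro i'
      show (Function.update Bpend i none i').isSome = _
      rw [hp]
      by_cases hii : i' = i
      · subst hii; simp
      · simp only [Function.update_of_ne hii, hpend i']

lemma sim_run (hall : ∀ i h op, S1.allowed i h op = true) :
    ∀ (α : List (Event n (LLContestSpec n))) {CA CA' : Config (lift B opmap retmap)}
      {CB : Config B}, rel B opmap retmap CA CB →
    α.foldlM (fun C e => nextConfig (lift B opmap retmap) C e) CA = some CA' →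
    ∃ CB', (tr B opmap retmap d CA α).foldlM (fun C e => nextConfig B C e) CB = some CB' ∧
      rel B opmap retmap CA' CB' := by
  intro α
  induction α with
  | nil =>
    intro CA CA' CB hrel h
    simp only [List.foldlM_nil] at h
    cases h
    exact ⟨CB, rfl, hrel⟩
  | cons e t ih =>
    intro CA CA' CB hrel h
    simp only [List.foldlM_cons] at h
    cases he : nextConfig (lift B opmap retmap) CA e with
    | none => rw [he] at h; simp at h
    | some CA1 =>
      rw [he] at h
      obtain ⟨CB1, hb1, hrel1⟩ := sim_step B opmap retmap d hall hrel he
      have hnc : nc (lift B opmap retmap) CA e = CA1 := by simp [nc, he]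
      obtain ⟨CB', hb', hrel'⟩ := ih hrel1 (by simpa using h)
      refine ⟨CB', ?_, hrel'⟩
      rw [tr, List.foldlM_cons, hb1, hnc]
      simpa using hb'

lemma rel_init : rel B opmap retmap (initConfig (lift B opmap retmap)) (initConfig B) :=
  ⟨rfl, fun _ => rfl, fun _ => rfl⟩

lemma isExec_tr (hall : ∀ i h op, S1.allowed i h op = true)
    {α : List (Event n (LLContestSpec n))} (h : IsExec (lift B opmap retmap) α) :
    IsExec B (tr B opmap retmap d (initConfig (lift B opmap retmap)) α) := by
  unfold IsExec at h ⊢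
  cases hc : execConfig (lift B opmap retmap) α with
  | none => rw [hc] at h; simp at h
  | some CA' =>
    obtain ⟨CB', hb, _⟩ :=
      sim_run B opmap retmap d hall α (rel_init B opmap retmap) hc
    unfold execConfig
    rw [hb]
    rfl

/-! ### Shape facts about executions of the lifted implementation -/

lemma loc_count {α : List (Event n (LLContestSpec n))}
    (h : IsExec (lift B opmap retmap) α) :
    ∀ p, p ≤ α.length → ∀ i,
      ((cfgAt (lift B opmap retmap) α p).loc i).2 =
        ((cfgAt (lift B opmap retmap) α p).hist i).length := by
  intro p
  induction p with
  | zero => intro _ i; simp [cfgAt, initConfig, lift]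
  | succ p ih =>
    intro hp i
    have hp' : p < α.length := hp
    obtain ⟨e, he⟩ : ∃ e, α[p]? = some e := ⟨α[p], List.getElem?_eq_getElem hp'⟩
    have hstep := step_at h he
    cases e with
    | inv i' op =>
      obtain ⟨_, _, _, hl, _, hh⟩ := inv_inversion hstep
      rw [hl, hh]
      by_cases hii : i' = i
      · rw [hii, Function.update_self, Function.update_self]
        show ((cfgAt (lift B opmap retmap) α p).loc i).2 + 1 = _
        rw [ih (le_of_lt hp') i]
        simp
      · rw [Function.update_of_ne (fun hc => hii hc.symm),
          Function.update_of_ne (fun hc => hii hc.symm)]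
        exact ih (le_of_lt hp') i
    | step i' =>
      obtain ⟨_, _, _, hl, _, hh⟩ := step_inversion hstep
      rw [hl, hh]
      by_cases hii : i' = i
      · rw [hii, Function.update_self]
        rw [← ih (le_of_lt hp') i]
        rfl
      · rw [Function.update_of_ne (fun hc => hii hc.symm)]
        exact ih (le_of_lt hp') i
    | res i' r =>
      obtain ⟨_, _, _, hl, _, hh⟩ := res_inversion hstep
      rw [hl, hh]
      exact ih (le_of_lt hp') i

lemma inv_shape {α : List (Event n (LLContestSpec n))}
    (h : IsExec (lift B opmap retmap) α) {p : ℕ} {i : Fin n} {op : ContestOp}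
    (hp : α[p]? = some (.inv i op)) : op = cop i := by
  have hstep := step_at h hp
  obtain ⟨_, hallow, _⟩ := inv_inversion hstep
  cases op with
  | compete =>
    have : (i.val != 0) = true := hallow
    simp only [bne_iff_ne, ne_eq] at this
    simp [cop, this]
  | decide =>
    have : ((i.val == 0) && ((cfgAt (lift B opmap retmap) α p).hist i).isEmpty) = true :=
      hallow
    simp only [Bool.and_eq_true, beq_iff_eq] at this
    simp [cop, this.1]

lemma decide_hist_empty {α : List (Event n (LLContestSpec n))}
    (h : IsExec (lift B opmap retmap) α) {p : ℕ} {i : Fin n}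
    (hp : α[p]? = some (.inv i ContestOp.decide)) :
    (cfgAt (lift B opmap retmap) α p).hist i = [] := by
  have hstep := step_at h hp
  obtain ⟨_, hallow, _⟩ := inv_inversion hstep
  have : ((i.val == 0) && ((cfgAt (lift B opmap retmap) α p).hist i).isEmpty) = true := hallow
  simp only [Bool.and_eq_true, List.isEmpty_iff] at this
  exact this.2

lemma mem_invOps_of_getElem {α : List (Event n (LLContestSpec n))} {p q : ℕ}
    {i : Fin n} {op : ContestOp}
    (hp : α[p]? = some (.inv i op)) (hpq : p < q) :
    op ∈ invOps (S := LLContestSpec n) i (α.take q) := by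
  have h1 : (α.take q)[p]? = some (.inv i op) := by
    rw [List.getElem?_take, if_pos hpq]; exact hp
  have h2 : (Event.inv i op) ∈ α.take q := by
    have hlt : p < (α.take q).length := by
      by_contra hc
      rw [List.getElem?_eq_none (le_of_not_gt hc)] at h1
      cases h1
    have hg := List.getElem_mem (l := α.take q) (n := p) hlt
    rw [List.getElem?_eq_getElem hlt, Option.some_inj] at h1
    rwa [h1] at hg
  exact List.mem_filterMap.mpr ⟨.inv i op, h2, by simp; rfl⟩

lemma decide_unique {α : List (Event n (LLContestSpec n))}
    (h : IsExec (lift B opmap retmap) α) {p q : ℕ} {i i' : Fin n} {op op' : ContestOp}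
    (hp : α[p]? = some (.inv i op)) (hq : α[q]? = some (.inv i' op'))
    (hi : i.val = 0) (hi' : i'.val = 0) : p = q := by
  have hii : i = i' := Fin.ext (hi.trans hi'.symm)
  subst hii
  have key : ∀ a b : ℕ, a < b → ∀ op1, α[a]? = some (.inv i op1) → ∀ op2,
      α[b]? = some (.inv i op2) → False := by
    intro a b hab op1 ha op2 hb
    have hop2 : op2 = cop i := inv_shape B opmap retmap h hb
    have hcop : cop i = ContestOp.decide := by simp [cop, hi]
    rw [hop2, hcop] at hb
    have hblen : b < α.length := by
      by_contra hc
      rw [List.getElem?_eq_none (le_of_not_gt hc)] at hb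
      cases hb
    have hhe := decide_hist_empty B opmap retmap h hb
    rw [hist_spec h b (le_of_lt hblen) i] at hhe
    have hmem := mem_invOps_of_getElem ha hab
    rw [hhe] at hmem
    exact absurd hmem List.not_mem_nil
  rcases lt_trichotomy p q with hlt | heq | hgt
  · exact (key p q hlt op hp op' hq).elim
  · exact heq
  · exact (key q p hgt op' hq op hp).elim

lemma count_mono {α : List (Event n (LLContestSpec n))}
    (h : IsExec (lift B opmap retmap) α) {j j' : ℕ} {i : Fin n} {op op' : ContestOp}
    (hj : α[j]? = some (.inv i op)) (hj' : α[j']? = some (.inv i op')) (hlt : j < j') :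
    ((cfgAt (lift B opmap retmap) α j).loc i).2 <
      ((cfgAt (lift B opmap retmap) α j').loc i).2 := by
  have hjlen : j < α.length := by
    by_contra hc
    rw [List.getElem?_eq_none (le_of_not_gt hc)] at hj
    cases hj
  have hj'len : j' < α.length := by
    by_contra hc
    rw [List.getElem?_eq_none (le_of_not_gt hc)] at hj'
    cases hj'
  rw [loc_count B opmap retmap h j (le_of_lt hjlen) i,
    loc_count B opmap retmap h j' (le_of_lt hj'len) i,
    hist_spec h j (le_of_lt hjlen) i, hist_spec h j' (le_of_lt hj'len) i]
  have h1 : invOps (S := LLContestSpec n) i (α.take (j+1)) =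
      invOps i (α.take j) ++ ([op] : List (LLContestSpec n).Op) := by
    rw [List.take_succ, hj]
    unfold invOps
    rw [List.filterMap_append]
    simp
    exact List.filterMap_cons_some (if_pos rfl)
  have h2 : (α.take (j+1)) <+: (α.take j') :=
    List.take_isPrefix_take.mpr (Or.inl hlt)
  have h3 : (invOps (S := LLContestSpec n) i (α.take (j+1))).length ≤
      (invOps i (α.take j')).length :=
    List.Sublist.length_le (List.Sublist.filterMap _ h2.sublist)
  rw [h1] at h3
  simp only [List.length_append, List.length_singleton] at h3
  have : ([op] : List (LLContestSpec n).Op).length = 1 := rfl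
  omega

/-! ### Position-wise correspondence -/

/-- The process invoking at position `j` (junk if there is no invocation there). -/
noncomputable def procAt (hn : 0 < n) (α : List (Event n (LLContestSpec n))) (j : ℕ) :
    Fin n :=
  match α[j]? with
  | some (.inv i _) => i
  | _ => ⟨0, hn⟩

lemma procAt_eq (hn : 0 < n) {α : List (Event n (LLContestSpec n))} {j : ℕ} {i : Fin n}
    {op : ContestOp} (hj : α[j]? = some (.inv i op)) : procAt hn α j = i := by
  unfold procAt
  rw [hj]

lemma tr_getElem_init {α : List (Event n (LLContestSpec n))} (p : ℕ) :
    (tr B opmap retmap d (initConfig (lift B opmap retmap)) α)[p]? =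
      α[p]?.map (trE B opmap retmap d (cfgAt (lift B opmap retmap) α p)) :=
  tr_getElem? B opmap retmap d α (initConfig (lift B opmap retmap)) p

lemma tr_inv_fwd {α : List (Event n (LLContestSpec n))} {p : ℕ} {i : Fin n} {op : ContestOp}
    (hp : α[p]? = some (.inv i op)) :
    (tr B opmap retmap d (initConfig (lift B opmap retmap)) α)[p]? =
      some (.inv i (opmap i ((cfgAt (lift B opmap retmap) α p).loc i).2 op)) := by
  rw [tr_getElem_init, hp]
  rfl

lemma tr_step_fwd {α : List (Event n (LLContestSpec n))} {p : ℕ} {i : Fin n}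
    (hp : α[p]? = some (.step i)) :
    (tr B opmap retmap d (initConfig (lift B opmap retmap)) α)[p]? = some (.step i) := by
  rw [tr_getElem_init, hp]
  rfl

lemma res_shape {α : List (Event n (LLContestSpec n))}
    (h : IsExec (lift B opmap retmap) α) {p : ℕ} {i : Fin n} {r : Option ℕ}
    (hp : α[p]? = some (.res i r)) :
    ∃ r1, B.ret i ((cfgAt (lift B opmap retmap) α p).loc i).1 = some r1 ∧
      retmap i r1 = r := by
  have hstep := step_at h hp
  obtain ⟨_, hret, _⟩ := res_inversion hstep
  exact Option.map_eq_some_iff.mp hret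

lemma tr_res_fwd {α : List (Event n (LLContestSpec n))}
    (h : IsExec (lift B opmap retmap) α) {p : ℕ} {i : Fin n} {r : Option ℕ}
    (hp : α[p]? = some (.res i r)) :
    ∃ r1, (tr B opmap retmap d (initConfig (lift B opmap retmap)) α)[p]? =
      some (.res i r1) ∧ retmap i r1 = r := by
  obtain ⟨r1, hr1, hmap⟩ := res_shape B opmap retmap h hp
  refine ⟨r1, ?_, hmap⟩
  rw [tr_getElem_init, hp]
  simp only [Option.map_some]
  show some (Event.res i ((B.ret i ((cfgAt (lift B opmap retmap) α p).loc i).1).getD d)) = _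
  rw [hr1]
  rfl

lemma tr_bwd {α : List (Event n (LLContestSpec n))} {p : ℕ} {x : Event n S1}
    (hp : (tr B opmap retmap d (initConfig (lift B opmap retmap)) α)[p]? = some x) :
    ∃ e, α[p]? = some e ∧ trE B opmap retmap d (cfgAt (lift B opmap retmap) α p) e = x := by
  rw [tr_getElem_init] at hp
  cases he : α[p]? with
  | none => rw [he] at hp; cases hp
  | some e =>
    rw [he] at hp
    exact ⟨e, rfl, Option.some_injective _ hp⟩

lemma tr_inv_bwd {α : List (Event n (LLContestSpec n))} {p : ℕ} {i : Fin n} {op1 : S1.Op}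
    (hp : (tr B opmap retmap d (initConfig (lift B opmap retmap)) α)[p]? =
      some (.inv i op1)) :
    ∃ op, α[p]? = some (.inv i op) ∧
      op1 = opmap i ((cfgAt (lift B opmap retmap) α p).loc i).2 op := by
  obtain ⟨e, he, htr⟩ := tr_bwd B opmap retmap d hp
  cases e with
  | inv i' op =>
    obtain ⟨h1, h2⟩ : i' = i ∧ opmap i' ((cfgAt (lift B opmap retmap) α p).loc i').2 op = op1 := by
      cases htr; exact ⟨rfl, rfl⟩
    subst h1
    exact ⟨op, he, h2.symm⟩
  | step i' => exact absurd htr (by simp [trE])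
  | res i' r => exact absurd htr (by simp [trE])

lemma tr_res_bwd {α : List (Event n (LLContestSpec n))}
    (h : IsExec (lift B opmap retmap) α) {p : ℕ} {i : Fin n} {r1 : S1.Res}
    (hp : (tr B opmap retmap d (initConfig (lift B opmap retmap)) α)[p]? =
      some (.res i r1)) :
    α[p]? = some (.res i (retmap i r1)) := by
  obtain ⟨e, he, htr⟩ := tr_bwd B opmap retmap d hp
  cases e with
  | inv i' op => exact absurd htr (by simp [trE])
  | step i' => exact absurd htr (by simp [trE])
  | res i' r =>
    obtain ⟨h1, h2⟩ : i' = i ∧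
        (B.ret i' ((cfgAt (lift B opmap retmap) α p).loc i').1).getD d = r1 := by
      cases htr; exact ⟨rfl, rfl⟩
    subst h1
    obtain ⟨r1', hr1', hmap⟩ := res_shape B opmap retmap h he
    rw [hr1'] at h2
    simp only [Option.getD_some] at h2
    subst h2
    rw [hmap]
    exact he

/-! ### Transfer of `Matches` and `Precedes` -/

lemma matches_tr (hn : 0 < n) {α : List (Event n (LLContestSpec n))}
    (h : IsExec (lift B opmap retmap) α) {j k : ℕ} {r : Option ℕ}
    (hm : Matches α j k r) :
    ∃ r1, Matches (tr B opmap retmap d (initConfig (lift B opmap retmap)) α) j k r1 ∧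
      retmap (procAt hn α j) r1 = r := by
  obtain ⟨i, op, hj, hk, hjk, hno⟩ := hm
  obtain ⟨r1, hk1, hmap⟩ := tr_res_fwd B opmap retmap d h hk
  refine ⟨r1, ⟨i, _, tr_inv_fwd B opmap retmap d hj, hk1, hjk, ?_⟩, ?_⟩
  · intro m hm1 hm2 r' hr'
    have := tr_res_bwd B opmap retmap d h hr'
    exact hno m hm1 hm2 _ this
  · rw [procAt_eq hn hj]
    exact hmap

lemma matches_of_tr (hn : 0 < n) {α : List (Event n (LLContestSpec n))}
    (h : IsExec (lift B opmap retmap) α) {j k : ℕ} {r1 : S1.Res}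
    (hm : Matches (tr B opmap retmap d (initConfig (lift B opmap retmap)) α) j k r1) :
    Matches α j k (retmap (procAt hn α j) r1) := by
  obtain ⟨i, op1, hj, hk, hjk, hno⟩ := hm
  obtain ⟨op, hj', _⟩ := tr_inv_bwd B opmap retmap d hj
  have hk' := tr_res_bwd B opmap retmap d h hk
  rw [procAt_eq hn hj']
  refine ⟨i, op, hj', hk', hjk, ?_⟩
  intro m hm1 hm2 r' hr'
  obtain ⟨r1', hr1', _⟩ := tr_res_fwd B opmap retmap d h hr'
  exact hno m hm1 hm2 r1' hr1'

lemma precedes_iff {α : List (Event n (LLContestSpec n))} (hn : 0 < n)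
    (h : IsExec (lift B opmap retmap) α) {j j' : ℕ} :
    Precedes (tr B opmap retmap d (initConfig (lift B opmap retmap)) α) j j' ↔
      Precedes α j j' := by
  constructor
  · rintro ⟨k, r1, hm, hk⟩
    exact ⟨k, _, matches_of_tr B opmap retmap d hn h hm, hk⟩
  · rintro ⟨k, r, hm, hk⟩
    obtain ⟨r1, hm1, _⟩ := matches_tr B opmap retmap d hn h hm
    exact ⟨k, r1, hm1, hk⟩

/-! ### From sequential runs of `S1` to contest runs -/

/-- Convert a sequential run of `S1` into a contest run. -/
def convL (rm : Fin n → S1.Res → Option ℕ) (l : List (Fin n × S1.Op × S1.Res)) :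
    List (Fin n × ContestOp × Option ℕ) :=
  l.map (fun e => (e.1, cop e.1, rm e.1 e.2.2))

lemma contest_run
    (Inv : S1.State → (Fin n → ℕ) → Prop)
    (hcompete : ∀ (i : Fin n), i.val ≠ 0 → ∀ (c : ℕ) (cnt : Fin n → ℕ) s s' r,
      cnt i ≤ c → Inv s cnt → S1.δ s i (opmap i c ContestOp.compete) s' r →
      retmap i r = none ∧ Inv s' (Function.update cnt i (cnt i + 1)))
    (hdecide : ∀ (i : Fin n), i.val = 0 → ∀ (c : ℕ) (cnt : Fin n → ℕ) s s' r,
      Inv s cnt → S1.δ s i (opmap i c ContestOp.decide) s' r →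
      (∃ x, retmap i r = some x ∧ ∀ j : Fin n, j.val ≠ 0 → cnt j ≤ x) ∧ Inv s' cnt) :
    ∀ (l : List (Fin n × S1.Op × S1.Res)) (cs : List ℕ) (s : S1.State)
      (cnt lo : Fin n → ℕ) (flag : Bool),
      SeqRun S1 s l →
      List.Forall₂ (fun (e : Fin n × S1.Op × S1.Res) (c : ℕ) =>
        e.2.1 = opmap e.1 c (cop e.1)) l cs →
      (l.zip cs).Pairwise (fun a b => a.1.1 = b.1.1 → a.2 < b.2) →
      (∀ e ∈ l.zip cs, lo e.1.1 ≤ e.2) →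
      l.Pairwise (fun a b => ¬(a.1.val = 0 ∧ b.1.val = 0)) →
      (flag = true → ∀ e ∈ l, e.1.val ≠ 0) →
      Inv s cnt → (∀ j, cnt j ≤ lo j) →
      SeqRun (LLContestSpec n) (cnt, flag) (convL retmap l) := by
  intro l
  induction l with
  | nil =>
    intro cs s cnt lo flag _ _ _ _ _ _ _ _
    exact SeqRun.nil _
  | cons e t ih =>
    intro cs s cnt lo flag hrun hf2 hzp hlo hpz hflag hinv hcl
    obtain ⟨i, op1, r1⟩ := e
    cases cs with
    | nil => cases hf2
    | cons c cs' =>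
      cases hrun with
      | cons hδ htail =>
        rename_i s'
        obtain ⟨hopc, hf2'⟩ := List.forall₂_cons.mp hf2
        simp only at hopc
        have hzipc : ((i, op1, r1) :: t).zip (c :: cs') =
            ((i, op1, r1), c) :: t.zip cs' := rfl
        rw [hzipc] at hzp hlo
        obtain ⟨hzphead, hzptail⟩ := List.pairwise_cons.mp hzp
        obtain ⟨hpzhead, hpztail⟩ := List.pairwise_cons.mp hpz
        have hlohead : lo i ≤ c := hlo _ List.mem_cons_self
        have hlotail : ∀ e ∈ t.zip cs', lo e.1.1 ≤ e.2 :=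
          fun e he => hlo e (List.mem_cons_of_mem _ he)
        by_cases hi : i.val = 0
        · -- decide
          have hcop : cop i = ContestOp.decide := by simp [cop, hi]
          rw [hcop] at hopc
          have hflagfalse : flag = false := by
            cases hflag2 : flag with
            | false => rfl
            | true =>
              exact absurd hi (hflag hflag2 (i, op1, r1) List.mem_cons_self)
          subst hflagfalse
          rw [hopc] at hδ
          obtain ⟨⟨x, hx, hbound⟩, hinv'⟩ := hdecide i hi c cnt s s' r1 hinv hδ
          have hgoal : convL retmap ((i, op1, r1) :: t) =
              (i, cop i, retmap i r1) :: convL retmap t := rfl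
          rw [hgoal, hcop]
          refine SeqRun.cons (s' := (cnt, true)) ?_ ?_
          · right
            exact ⟨rfl, hi, rfl, rfl, rfl, x, hx, hbound⟩
          · refine ih cs' s' cnt lo true htail hf2' hzptail hlotail hpztail ?_ hinv' hcl
            intro _ e' he'
            have := hpzhead e' he'
            intro hc
            exact this ⟨hi, hc⟩
        · -- compete
          have hcop : cop i = ContestOp.compete := by simp [cop, hi]
          rw [hcop] at hopc
          rw [hopc] at hδ
          obtain ⟨hret, hinv'⟩ :=
            hcompete i hi c cnt s s' r1 (le_trans (hcl i) hlohead) hinv hδ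
          have hgoal : convL retmap ((i, op1, r1) :: t) =
              (i, cop i, retmap i r1) :: convL retmap t := rfl
          rw [hgoal, hcop, hret]
          refine SeqRun.cons (s' := (Function.update cnt i (cnt i + 1), flag)) ?_ ?_
          · left
            exact ⟨rfl, hi, rfl, rfl⟩
          · refine ih cs' s' (Function.update cnt i (cnt i + 1))
              (Function.update lo i (c + 1)) flag htail hf2' hzptail ?_ hpztail ?_ hinv' ?_
            · intro e' he'
              by_cases hii : e'.1.1 = i
              · rw [hii, Function.update_self]
                have := hzphead e' he'
                rw [hii] at this
                exact Nat.succ_le_of_lt (this rfl)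
              · rw [Function.update_of_ne hii]
                exact hlotail e' he'
            · intro hfl e' he'
              exact hflag hfl e' (List.mem_cons_of_mem _ he')
            · intro j
              by_cases hji : j = i
              · subst hji
                rw [Function.update_self, Function.update_self]
                exact Nat.succ_le_succ (le_trans (hcl j) hlohead)
              · rw [Function.update_of_ne hji, Function.update_of_ne hji]
                exact hcl j

/-! ### Transfer of linearizations -/

lemma isLin_transfer (hn : 0 < n)
    {α : List (Event n (LLContestSpec n))} (h : IsExec (lift B opmap retmap) α)
    (hexecB : IsExec B (tr B opmap retmap d (initConfig (lift B opmap retmap)) α))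
    {σ : List (ℕ × S1.Res)}
    (hL : IsLinearization S1 (tr B opmap retmap d (initConfig (lift B opmap retmap)) α) σ)
    (hconv : ∀ (l : List (Fin n × S1.Op × S1.Res)) (cs : List ℕ),
      SeqRun S1 S1.init l →
      List.Forall₂ (fun (e : Fin n × S1.Op × S1.Res) (c : ℕ) =>
        e.2.1 = opmap e.1 c (cop e.1)) l cs →
      (l.zip cs).Pairwise (fun a b => a.1.1 = b.1.1 → a.2 < b.2) →
      l.Pairwise (fun a b => ¬(a.1.val = 0 ∧ b.1.val = 0)) →
      SeqRun (LLContestSpec n) (LLContestSpec n).init (convL retmap l)) :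
    IsLinearization (LLContestSpec n) α
      (σ.map (fun p => (p.1, retmap (procAt hn α p.1) p.2))) := by
  constructor
  · -- inv_mem
    intro p hp
    obtain ⟨q, hq, hfq⟩ := List.mem_map.mp hp
    obtain ⟨i, op1, hq1⟩ := hL.inv_mem q hq
    obtain ⟨op, hop, _⟩ := tr_inv_bwd B opmap retmap d hq1
    rw [← hfq]
    exact ⟨i, op, hop⟩
  · -- nodup
    simpa [Function.comp_def] using hL.nodup
  · -- complete_mem
    intro j k r hm
    obtain ⟨r1, hm1, hmap⟩ := matches_tr B opmap retmap d hn h hm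
    have := hL.complete_mem j k r1 hm1
    refine List.mem_map.mpr ⟨(j, r1), this, ?_⟩
    simp [hmap]
  · -- complete_out
    intro j k r r' hm hmem
    obtain ⟨q, hq, hfq⟩ := List.mem_map.mp hmem
    obtain ⟨r1, hm1, hmap⟩ := matches_tr B opmap retmap d hn h hm
    have hq1 : q.1 = j := congrArg Prod.fst hfq
    have hq2 : retmap (procAt hn α q.1) q.2 = r' := congrArg Prod.snd hfq
    have : q = (j, q.2) := by rw [← hq1]
    rw [this] at hq
    have := hL.complete_out j k r1 q.2 hm1 hq
    rw [← hq2, hq1, this, hmap]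
  · -- realtime
    refine List.Pairwise.map _ ?_ hL.realtime
    intro a b hnp hp
    exact hnp ((precedes_iff B opmap retmap d hn h).mpr hp)
  · -- valid
    obtain ⟨lB, hf2, hseq⟩ := hL.valid
    have hlen : σ.length = lB.length := hf2.length_eq
    -- basic per-index facts
    have hfact : ∀ (t : ℕ) (ht : t < σ.length) (ht' : t < lB.length),
        α[(σ[t]'ht).1]? = some (.inv (lB[t]'ht').1 (cop (lB[t]'ht').1)) ∧
        (lB[t]'ht').2.1 = opmap (lB[t]'ht').1
          ((cfgAt (lift B opmap retmap) α (σ[t]'ht).1).loc (lB[t]'ht').1).2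
          (cop (lB[t]'ht').1) ∧
        procAt hn α (σ[t]'ht).1 = (lB[t]'ht').1 := by
      intro t ht ht'
      have hrel := hf2.get ht ht'
      obtain ⟨hinv1, _⟩ := hrel
      obtain ⟨op, hop, hopeq⟩ := tr_inv_bwd B opmap retmap d hinv1
      have hshape := inv_shape B opmap retmap h hop
      subst hshape
      exact ⟨hop, hopeq, procAt_eq hn hop⟩
    -- the count list
    set cs : List ℕ := σ.map
      (fun p => ((cfgAt (lift B opmap retmap) α p.1).loc (procAt hn α p.1)).2) with hcs
    have hcslen : cs.length = σ.length := by simp [hcs]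
    -- order: positions of entries of the same process increase along σ
    have horder : ∀ (t u : ℕ) (ht : t < σ.length) (hu : u < σ.length), t < u →
        ∀ (ht' : t < lB.length) (hu' : u < lB.length),
        (lB[t]'ht').1 = (lB[u]'hu').1 → (σ[t]'ht).1 < (σ[u]'hu).1 := by
      intro t u ht hu htu ht' hu' hproc
      obtain ⟨hopt, _, _⟩ := hfact t ht ht'
      obtain ⟨hopu, _, _⟩ := hfact u hu hu'
      rw [hproc] at hopt
      have hne : (σ[t]'ht).1 ≠ (σ[u]'hu).1 := by
        intro hc
        have h1 : (σ.map Prod.fst)[t]'(by simpa using ht) =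
            (σ.map Prod.fst)[u]'(by simpa using hu) := by
          rw [List.getElem_map, List.getElem_map]; exact hc
        exact (Nat.ne_of_lt htu) (List.Nodup.getElem_inj_iff hL.nodup |>.mp h1)
      rcases Nat.lt_or_ge (σ[t]'ht).1 (σ[u]'hu).1 with hlt | hge
      · exact hlt
      · exfalso
        have hlt' : (σ[u]'hu).1 < (σ[t]'ht).1 := lt_of_le_of_ne hge (Ne.symm hne)
        -- translated events are invocations of the same process in the B-execution
        have htrt := tr_inv_fwd B opmap retmap d hopt
        have htru := tr_inv_fwd B opmap retmap d hopu
        have hprec := same_proc_precedes hexecB htru htrt hlt'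
        have hrt := hL.realtime
        have := (List.pairwise_iff_getElem.mp hrt) t u ht hu htu
        exact this hprec
    refine ⟨convL retmap lB, ?_, ?_⟩
    · -- Forall₂ between the mapped linearization and the converted run
      refine List.forall₂_iff_get.mpr ?_
      constructor
      · simp [convL, hlen]
        exact (List.length_map _).symm
      · intro t h1 h2
        simp only [List.get_eq_getElem]
        have ht : t < σ.length := by simpa using h1
        have ht' : t < lB.length := by rw [← hlen]; exact ht
        obtain ⟨hop, _, hproc⟩ := hfact t ht ht'
        have hrel := hf2.get ht ht'
        simp only [convL, List.getElem_map, List.get_eq_getElem]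
        erw [List.get_eq_getElem, List.getElem_map]
        refine ⟨hop, ?_⟩
        simp only [List.get_eq_getElem] at hrel
        show retmap (procAt hn α (σ[t]'ht).1) (σ[t]'ht).2 = _
        rw [hproc, hrel.2]
    · -- the converted run is a valid contest run
      refine hconv lB cs hseq ?_ ?_ ?_
      · -- Forall₂ op shape
        rw [List.forall₂_iff_get]
        constructor
        · rw [hcslen, hlen]
        · intro t h1 h2
          have ht : t < σ.length := by rw [← hcslen]; exact h2
          have ht' : t < lB.length := h1
          obtain ⟨_, hopeq, hproc⟩ := hfact t ht ht'
          simp only [List.get_eq_getElem]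
          have hcst : cs[t]'h2 =
              ((cfgAt (lift B opmap retmap) α (σ[t]'ht).1).loc
                (procAt hn α (σ[t]'ht).1)).2 := by
            simp only [hcs, List.getElem_map]
          rw [hcst, hproc]
          exact hopeq
      · -- counts increase for the same process
        rw [List.pairwise_iff_getElem]
        intro t u htz huz htu
        obtain ⟨ht', htc⟩ : t < lB.length ∧ t < cs.length := by simpa using htz
        obtain ⟨hu', huc⟩ : u < lB.length ∧ u < cs.length := by simpa using huz
        have ht : t < σ.length := by rw [hlen]; exact ht'
        have hu : u < σ.length := by rw [hlen]; exact hu'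
        have hzt : (lB.zip cs)[t]'htz = (lB[t]'ht', cs[t]'(by rw [hcslen, hlen]; exact ht')) :=
          List.getElem_zip ..
        have hzu : (lB.zip cs)[u]'huz = (lB[u]'hu', cs[u]'(by rw [hcslen, hlen]; exact hu')) :=
          List.getElem_zip ..
        rw [hzt, hzu]
        intro hproc
        have hproc' : (lB[t]'ht').1 = (lB[u]'hu').1 := hproc
        have hjj := horder t u ht hu htu ht' hu' hproc'
        obtain ⟨hopt, _, hproct⟩ := hfact t ht ht'
        obtain ⟨hopu, _, hprocu⟩ := hfact u hu hu'
        rw [hproc'] at hopt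
        show cs[t]'(by rw [hcslen]; exact ht) < cs[u]'(by rw [hcslen]; exact hu)
        have hcst : cs[t]'(by rw [hcslen]; exact ht) =
            ((cfgAt (lift B opmap retmap) α (σ[t]'ht).1).loc
              (procAt hn α (σ[t]'ht).1)).2 := by simp only [hcs, List.getElem_map]
        have hcsu : cs[u]'(by rw [hcslen]; exact hu) =
            ((cfgAt (lift B opmap retmap) α (σ[u]'hu).1).loc
              (procAt hn α (σ[u]'hu).1)).2 := by simp only [hcs, List.getElem_map]
        rw [hcst, hcsu, hproct, hprocu, hproc']
        exact count_mono B opmap retmap h hopt hopu hjj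
      · -- at most one entry of the referee
        rw [List.pairwise_iff_getElem]
        intro t u ht' hu' htu
        have ht : t < σ.length := by rw [hlen]; exact ht'
        have hu : u < σ.length := by rw [hlen]; exact hu'
        rintro ⟨hz1, hz2⟩
        obtain ⟨hopt, _, _⟩ := hfact t ht ht'
        obtain ⟨hopu, _, _⟩ := hfact u hu hu'
        have heq := decide_unique B opmap retmap h hopt hopu hz1 hz2
        have h1 : (σ.map Prod.fst)[t]'(by simpa using ht) =
            (σ.map Prod.fst)[u]'(by simpa using hu) := by
          rw [List.getElem_map, List.getElem_map]; exact heq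
        exact (Nat.ne_of_lt htu) (List.Nodup.getElem_inj_iff hL.nodup |>.mp h1)

/-! ### Wait-freedom and prefix-closedness transfer, and the master theorem -/

lemma procAt_append (hn : 0 < n) {α β : List (Event n (LLContestSpec n))} {j : ℕ}
    (hj : j < α.length) : procAt hn (α ++ β) j = procAt hn α j := by
  unfold procAt
  rw [List.getElem?_append, if_pos hj]

lemma prefE_succ {S : Spec n} (E : ℕ → Event n S) (m : ℕ) :
    prefE E (m + 1) = prefE E m ++ [E m] := by
  unfold prefE
  rw [List.range_succ, List.map_append]
  rfl

lemma prefE_length {S : Spec n} (E : ℕ → Event n S) (m : ℕ) :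
    (prefE E m).length = m := by simp [prefE]

lemma waitFree_lift (d0 : S1.Res) (hall : ∀ i h op, S1.allowed i h op = true)
    (hwf : WaitFree B) : WaitFree (lift B opmap retmap) := by
  intro E hex i hsteps
  let EB : ℕ → Event n S1 := fun m =>
    trE B opmap retmap d0 (cfgAt (lift B opmap retmap) (prefE E (m + 1)) m) (E m)
  have hpref : ∀ m, prefE EB m =
      tr B opmap retmap d0 (initConfig (lift B opmap retmap)) (prefE E m) := by
    intro m
    induction m with
    | zero => rfl
    | succ m ih =>
      rw [prefE_succ EB m, prefE_succ E m,
        tr_append B opmap retmap d0 (prefE E m) [E m] (initConfig (lift B opmap retmap)), ih]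
      congr 1
      have h1 : tr B opmap retmap d0
            ((prefE E m).foldl (nc (lift B opmap retmap)) (initConfig (lift B opmap retmap)))
            [E m] =
          [trE B opmap retmap d0
            ((prefE E m).foldl (nc (lift B opmap retmap)) (initConfig (lift B opmap retmap)))
            (E m)] := rfl
      rw [h1]
      have htake : (prefE E (m + 1)).take m = prefE E m := by
        rw [prefE_succ E m]
        exact List.take_left' (prefE_length E m)
      show [trE B opmap retmap d0 (cfgAt (lift B opmap retmap) (prefE E (m + 1)) m) (E m)] = _
      unfold cfgAt
      rw [htake]
  have hexB : ∀ m, IsExec B (prefE EB m) := by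
    intro m
    rw [hpref m]
    exact isExec_tr B opmap retmap d0 hall (hex m)
  have hstepsB : ∀ m, ∃ m', m ≤ m' ∧ EB m' = Event.step i := by
    intro m
    obtain ⟨m', hm', hstep⟩ := hsteps m
    refine ⟨m', hm', ?_⟩
    show trE B opmap retmap d0 _ (E m') = Event.step i
    rw [hstep]
    rfl
  intro m
  obtain ⟨m', hm', r1, hres⟩ := hwf EB hexB i hstepsB m
  refine ⟨m', hm', ?_⟩
  have hres' : trE B opmap retmap d0
      (cfgAt (lift B opmap retmap) (prefE E (m' + 1)) m') (E m') = Event.res i r1 := hres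
  cases hEm : E m' with
  | inv i' op => rw [hEm] at hres'; exact absurd hres' (by simp [trE])
  | step i' => rw [hEm] at hres'; exact absurd hres' (by simp [trE])
  | res i' r =>
    rw [hEm] at hres'
    have hii : i' = i := by
      cases hres'
      rfl
    rw [hii]
    exact ⟨r, rfl⟩

/-- The linearization function for the lifted implementation. -/
noncomputable def LA (hn : 0 < n) (d0 : S1.Res)
    (LB : List (Event n S1) → List (ℕ × S1.Res))
    (α : List (Event n (LLContestSpec n))) : List (ℕ × Option ℕ) :=
  (LB (tr B opmap retmap d0 (initConfig (lift B opmap retmap)) α)).map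
    (fun p => (p.1, retmap (procAt hn α p.1) p.2))

theorem master (hn : 0 < n)
    (hall : ∀ i h op, S1.allowed i h op = true) (d0 : S1.Res)
    (Inv : S1.State → (Fin n → ℕ) → Prop)
    (hinit : Inv S1.init (fun _ => 0))
    (hcompete : ∀ (i : Fin n), i.val ≠ 0 → ∀ (c : ℕ) (cnt : Fin n → ℕ) s s' r,
      cnt i ≤ c → Inv s cnt → S1.δ s i (opmap i c ContestOp.compete) s' r →
      retmap i r = none ∧ Inv s' (Function.update cnt i (cnt i + 1)))
    (hdecide : ∀ (i : Fin n), i.val = 0 → ∀ (c : ℕ) (cnt : Fin n → ℕ) s s' r,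
      Inv s cnt → S1.δ s i (opmap i c ContestOp.decide) s' r →
      (∃ x, retmap i r = some x ∧ ∀ j : Fin n, j.val ≠ 0 → cnt j ≤ x) ∧ Inv s' cnt)
    (hwf : WaitFree B) (hsl : StronglyLinearizable B) :
    ∃ A : Impl n (LLContestSpec n) ι M, WaitFree A ∧ StronglyLinearizable A := by
  obtain ⟨LB, hLF, hPC⟩ := hsl
  have hconv : ∀ (l : List (Fin n × S1.Op × S1.Res)) (cs : List ℕ),
      SeqRun S1 S1.init l →
      List.Forall₂ (fun (e : Fin n × S1.Op × S1.Res) (c : ℕ) =>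
        e.2.1 = opmap e.1 c (cop e.1)) l cs →
      (l.zip cs).Pairwise (fun a b => a.1.1 = b.1.1 → a.2 < b.2) →
      l.Pairwise (fun a b => ¬(a.1.val = 0 ∧ b.1.val = 0)) →
      SeqRun (LLContestSpec n) (LLContestSpec n).init (convL retmap l) := by
    intro l cs h1 h2 h3 h4
    exact contest_run opmap retmap Inv hcompete hdecide l cs S1.init
      (fun _ => 0) (fun _ => 0) false h1 h2 h3 (fun e _ => Nat.zero_le _) h4
      (fun hc => absurd hc (by simp)) hinit (fun j => le_refl 0)
  refine ⟨lift B opmap retmap, waitFree_lift B opmap retmap d0 hall hwf,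
    LA B opmap retmap hn d0 LB, ?_, ?_⟩
  · -- IsLinFun
    intro α hα
    have hB := isExec_tr B opmap retmap d0 hall hα
    exact isLin_transfer B opmap retmap d0 hn hα hB (hLF _ hB) hconv
  · -- PrefixClosedLin
    intro α β hαβ
    have hα : IsExec (lift B opmap retmap) α := isExec_prefix hαβ
    have htr : tr B opmap retmap d0 (initConfig (lift B opmap retmap)) (α ++ β) =
        tr B opmap retmap d0 (initConfig (lift B opmap retmap)) α ++
          tr B opmap retmap d0
            (α.foldl (nc (lift B opmap retmap)) (initConfig (lift B opmap retmap))) β :=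
      tr_append B opmap retmap d0 α β _
    have hBαβ : IsExec B (tr B opmap retmap d0 (initConfig (lift B opmap retmap)) (α ++ β)) :=
      isExec_tr B opmap retmap d0 hall hαβ
    have hBα : IsExec B (tr B opmap retmap d0 (initConfig (lift B opmap retmap)) α) :=
      isExec_tr B opmap retmap d0 hall hα
    have hpre : LB (tr B opmap retmap d0 (initConfig (lift B opmap retmap)) α) <+:
        LB (tr B opmap retmap d0 (initConfig (lift B opmap retmap)) (α ++ β)) := by
      have := hPC (tr B opmap retmap d0 (initConfig (lift B opmap retmap)) α)
        (tr B opmap retmap d0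
          (α.foldl (nc (lift B opmap retmap)) (initConfig (lift B opmap retmap))) β)
        (by rw [← htr]; exact hBαβ)
      rwa [← htr] at this
    obtain ⟨t, ht⟩ := hpre
    show LA B opmap retmap hn d0 LB α <+: LA B opmap retmap hn d0 LB (α ++ β)
    unfold LA
    rw [← ht, List.map_append]
    have hmapeq : (LB (tr B opmap retmap d0 (initConfig (lift B opmap retmap)) α)).map
        (fun p => (p.1, retmap (procAt hn (α ++ β) p.1) p.2)) =
        (LB (tr B opmap retmap d0 (initConfig (lift B opmap retmap)) α)).map
        (fun p => (p.1, retmap (procAt hn α p.1) p.2)) := by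
      refine List.map_congr_left ?_
      intro p hp
      obtain ⟨i, op1, hp1⟩ := (hLF _ hBα).inv_mem p hp
      have hplen : p.1 < α.length := by
        have hlen : p.1 <
            (tr B opmap retmap d0 (initConfig (lift B opmap retmap)) α).length := by
          by_contra hc
          rw [List.getElem?_eq_none (le_of_not_gt hc)] at hp1
          cases hp1
        rwa [tr_length] at hlen
      rw [procAt_append hn hplen]
    rw [hmapeq]
    exact List.prefix_append _ _

end LLCProof
end Framework

/-- For `n ≥ 2` processes, given a single wait-free strongly
linearizable implementation of any one of: a counter, a snapshot, a max register, a
fetch&increment object, or a fetch&add object (all from the base objects `M`), one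
can obtain a wait-free strongly linearizable implementation of the long-lived contest
object (from the same base objects). -/
theorem long_lived_contest_from_counter_snapshot_maxreg_fetchinc_fetchadd :
    ∀ (n : ℕ), 2 ≤ n →
    ∀ (ι : Type) (M : ι → BaseObject),
      ((∃ B : Impl n (CounterSpec n) ι M, WaitFree B ∧ StronglyLinearizable B) ∨
       (∃ B : Impl n (SnapshotSpec n) ι M, WaitFree B ∧ StronglyLinearizable B) ∨
       (∃ B : Impl n (MaxRegSpec n) ι M, WaitFree B ∧ StronglyLinearizable B) ∨
       (∃ B : Impl n (FetchIncSpec n) ι M, WaitFree B ∧ StronglyLinearizable B) ∨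
       (∃ B : Impl n (FetchAddSpec n) ι M, WaitFree B ∧ StronglyLinearizable B)) →
      ∃ A : Impl n (LLContestSpec n) ι M, WaitFree A ∧ StronglyLinearizable A := by
  intro n hn2 ι M h
  have hn : 0 < n := by omega
  rcases h with ⟨B, hwf, hsl⟩ | ⟨B, hwf, hsl⟩ | ⟨B, hwf, hsl⟩ | ⟨B, hwf, hsl⟩ | ⟨B, hwf, hsl⟩
  · -- counter
    refine LLCProof.master B
      (fun _ _ op => match op with | ContestOp.compete => true | ContestOp.decide => false)
      (fun i r => if i.val = 0 then r else none)
      hn (fun _ _ _ => rfl) none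
      (fun s cnt => ∀ j : Fin n, j.val ≠ 0 → cnt j ≤ s)
      (fun _ _ => Nat.zero_le _) ?_ ?_ hwf hsl
    · intro i hi c cnt s s' r _ hinv hδ
      rcases hδ with ⟨_, hs', hr⟩ | ⟨hop, _⟩
      · subst hs'; subst hr
        refine ⟨by simp, ?_⟩
        intro j hj
        by_cases hji : j = i
        · subst hji; rw [Function.update_self]; exact Nat.succ_le_succ (hinv j hj)
        · rw [Function.update_of_ne hji]; exact Nat.le_succ_of_le (hinv j hj)
      · exact absurd hop (by simp)
    · intro i hi c cnt s s' r hinv hδ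
      rcases hδ with ⟨hop, _⟩ | ⟨_, hs', hr⟩
      · exact absurd hop (by simp)
      · exact ⟨⟨s, by simp [hi, hr], fun j hj => hinv j hj⟩, by rw [hs']; exact hinv⟩
  · -- snapshot
    refine LLCProof.master B
      (fun i c op => match op with
        | ContestOp.compete => Sum.inl (i, c + 1)
        | ContestOp.decide => Sum.inr ())
      (fun i r => if i.val = 0 then r.map (fun f => Finset.univ.sup f) else none)
      hn (fun _ _ _ => rfl) none
      (fun s cnt => ∀ j : Fin n, j.val ≠ 0 → cnt j ≤ s j)
      (fun _ _ => Nat.zero_le _) ?_ ?_ hwf hsl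
    · intro i hi c cnt s s' r hc hinv hδ
      rcases hδ with ⟨j, v, hop, hs', hr⟩ | ⟨hop, _⟩
      · cases hop
        subst hs'; subst hr
        refine ⟨by simp, ?_⟩
        intro j' hj'
        by_cases hji : j' = i
        · subst hji
          simp only [Function.update_self]
          exact (Nat.succ_le_succ hc).trans_eq (Function.update_self (β := fun _ => ℕ) j' (c + 1) s).symm
        · simp only [Function.update_of_ne hji]
          exact (hinv j' hj').trans_eq (Function.update_of_ne (β := fun _ => ℕ) hji (c + 1) s).symm
      · exact absurd hop (by simp)
    · intro i hi c cnt s s' r hinv hδ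
      rcases hδ with ⟨j, v, hop, _, _⟩ | ⟨_, hs', hr⟩
      · exact absurd hop (by simp)
      · refine ⟨⟨Finset.univ.sup s, by simp [hi, hr]; exact ⟨s, rfl, rfl⟩, ?_⟩, by rw [hs']; exact hinv⟩
        intro j hj
        exact le_trans (hinv j hj) (Finset.le_sup (Finset.mem_univ j))
  · -- max register
    refine LLCProof.master B
      (fun _ c op => match op with
        | ContestOp.compete => some (c + 1)
        | ContestOp.decide => none)
      (fun i r => if i.val = 0 then r else none)
      hn (fun _ _ _ => rfl) none
      (fun s cnt => ∀ j : Fin n, j.val ≠ 0 → cnt j ≤ s)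
      (fun _ _ => Nat.zero_le _) ?_ ?_ hwf hsl
    · intro i hi c cnt s s' r hc hinv hδ
      rcases hδ with ⟨v, hop, hs', hr⟩ | ⟨hop, _⟩
      · cases hop
        subst hs'; subst hr
        refine ⟨by simp, ?_⟩
        intro j hj
        by_cases hji : j = i
        · subst hji
          rw [Function.update_self]
          exact le_trans (Nat.succ_le_succ hc) (le_max_right _ _)
        · rw [Function.update_of_ne hji]
          exact le_trans (hinv j hj) (le_max_left _ _)
      · exact absurd hop (by simp)
    · intro i hi c cnt s s' r hinv hδ
      rcases hδ with ⟨v, hop, _, _⟩ | ⟨_, hs', hr⟩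
      · exact absurd hop (by simp)
      · exact ⟨⟨s, by simp [hi, hr], fun j hj => hinv j hj⟩, by rw [hs']; exact hinv⟩
  · -- fetch&increment
    refine LLCProof.master B
      (fun _ _ _ => ())
      (fun i r => if i.val = 0 then some r else none)
      hn (fun _ _ _ => rfl) (0 : ℕ)
      (fun s cnt => ∀ j : Fin n, j.val ≠ 0 → cnt j ≤ s)
      (fun _ _ => Nat.zero_le _) ?_ ?_ hwf hsl
    · intro i hi c cnt s s' r _ hinv hδ
      obtain ⟨hs', hr⟩ := hδ
      subst hs'
      refine ⟨by simp [hi], ?_⟩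
      intro j hj
      by_cases hji : j = i
      · subst hji; rw [Function.update_self]; exact Nat.succ_le_succ (hinv j hj)
      · rw [Function.update_of_ne hji]; exact Nat.le_succ_of_le (hinv j hj)
    · intro i hi c cnt s s' r hinv hδ
      obtain ⟨hs', hr⟩ := hδ
      refine ⟨⟨s, by simp [hi, hr], fun j hj => hinv j hj⟩, ?_⟩
      rw [hs']
      intro j hj
      exact Nat.le_succ_of_le (hinv j hj)
  · -- fetch&add
    refine LLCProof.master B
      (fun _ _ op => match op with
        | ContestOp.compete => (1 : ℕ)
        | ContestOp.decide => (0 : ℕ))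
      (fun i r => if i.val = 0 then some r else none)
      hn (fun _ _ _ => rfl) (0 : ℕ)
      (fun s cnt => ∀ j : Fin n, j.val ≠ 0 → cnt j ≤ s)
      (fun _ _ => Nat.zero_le _) ?_ ?_ hwf hsl
    · intro i hi c cnt s s' r _ hinv hδ
      obtain ⟨hs', hr⟩ := hδ
      subst hs'
      refine ⟨by simp [hi], ?_⟩
      intro j hj
      by_cases hji : j = i
      · subst hji; rw [Function.update_self]; exact Nat.succ_le_succ (hinv j hj)
      · rw [Function.update_of_ne hji]; exact Nat.le_succ_of_le (hinv j hj)
    · intro i hi c cnt s s' r hinv hδ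
      obtain ⟨hs', hr⟩ := hδ
      exact ⟨⟨s, by simp [hi, hr], fun j hj => hinv j hj⟩, by rw [hs']; exact hinv⟩
end
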